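/- arXiv:2102.13415 — 6 statements merged into one kernel-verified Lean document; each statement's English description precedes it below -/
import Mathlib

section
/- For every α ∈ (0, 1/2] there exists a constant C > 0 such that for every integer M ≥ 2, every k ∈ {1, …, M−1} and every H : [0,1] → ℝ and K ≥ 0 satisfying sup_{x∈[0,1]} |H(x)| ≤ K and |H(x) − H(y)| ≤ K|x − y|^{2α} for all x, y ∈ [0,1], the Riemann-sum error of the k-th Fourier sine coefficient satisfies |⟨H, e_k⟩_M − h_k| ≤ C·K·k^{2α}·M^{−2α}. -/
open Real

/-- The sine basis functions `e_ℓ(y) = √2 sin(πℓy)`. -/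
noncomputable def sineB (ℓ : ℕ) (y : ℝ) : ℝ := Real.sqrt 2 * Real.sin (Real.pi * ℓ * y)

/-- The Fourier sine coefficients `h_ℓ = ∫₀¹ H(y) e_ℓ(y) dy`. -/
noncomputable def fourierSineCoef (H : ℝ → ℝ) (ℓ : ℕ) : ℝ :=
  ∫ y in (0 : ℝ)..1, H y * sineB ℓ y

/-- The discrete inner product `⟨H, e_k⟩_M = (1/M) ∑_{l=1}^{M−1} H(l/M) e_k(l/M)`. -/
noncomputable def discIP (M : ℕ) (H : ℝ → ℝ) (k : ℕ) : ℝ :=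
  (1 / (M : ℝ)) * ∑ l ∈ Finset.Icc 1 (M - 1), H ((l : ℝ) / M) * sineB k ((l : ℝ) / M)

private lemma sin_lip (x y : ℝ) : |Real.sin x - Real.sin y| ≤ |x - y| := by
  rw [Real.sin_sub_sin, abs_mul, abs_mul, abs_two]
  have h1 : |Real.sin ((x - y) / 2)| ≤ |(x - y) / 2| := Real.abs_sin_le_abs
  have h2 : |Real.cos ((x + y) / 2)| ≤ 1 := Real.abs_cos_le_one _
  calc 2 * |Real.sin ((x - y) / 2)| * |Real.cos ((x + y) / 2)|
      ≤ 2 * |(x - y) / 2| * 1 := by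
        apply mul_le_mul (by linarith [abs_nonneg (Real.sin ((x-y)/2))]) h2
          (abs_nonneg _) (by positivity)
    _ = |x - y| := by rw [mul_one, abs_div]; simp [abs_two]; ring

/-- For every `α ∈ (0,1/2]` there is a constant `C` such that for every `M ≥ 2`,
`k ∈ {1,…,M−1}` and every `H : [0,1] → ℝ` with `‖H‖_∞ ≤ K` and `2α`-Hölder constant `≤ K`,
the Riemann-sum error of the `k`-th Fourier sine coefficient satisfies
`|⟨H, e_k⟩_M − h_k| ≤ C K k^{2α} M^{−2α}`. -/
theorem riemann_sum_error_fourier_coefficient (α : ℝ) (hα : α ∈ Set.Ioc (0 : ℝ) (1 / 2)) :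
    ∃ C > (0 : ℝ), ∀ (M : ℕ), 2 ≤ M → ∀ k ∈ Finset.Icc 1 (M - 1),
      ∀ (H : ℝ → ℝ) (K : ℝ), 0 ≤ K →
      (∀ x ∈ Set.Icc (0 : ℝ) 1, |H x| ≤ K) →
      (∀ x ∈ Set.Icc (0 : ℝ) 1, ∀ y ∈ Set.Icc (0 : ℝ) 1,
        |H x - H y| ≤ K * |x - y| ^ (2 * α)) →
      |discIP M H k - fourierSineCoef H k| ≤ C * K * (k : ℝ) ^ (2 * α) * (M : ℝ) ^ (-(2 * α)) := by
  obtain ⟨hα0, hα2⟩ := hα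
  have h2α0 : (0:ℝ) < 2 * α := by linarith
  have h2α1 : 2 * α ≤ 1 := by linarith
  refine ⟨Real.sqrt 2 * (Real.pi + 1), by positivity, ?_⟩
  intro M hM k hk H K hK hbd hHol
  obtain ⟨hk1, hkM⟩ := Finset.mem_Icc.mp hk
  have hMpos : 0 < M := by omega
  have hMR : (0:ℝ) < M := by exact_mod_cast hMpos
  have hkMn : k ≤ M := by omega
  have hk1R : (1:ℝ) ≤ (k:ℝ) := by exact_mod_cast hk1
  have hkMR : (k:ℝ) ≤ M := by exact_mod_cast hkMn
  set r : ℝ := (k:ℝ) / M with hrdef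
  have hr0 : 0 < r := by positivity
  have hr1 : r ≤ 1 := by rw [hrdef, div_le_one hMR]; exact hkMR
  have hrr : r ≤ r ^ (2 * α) := by
    calc r = r ^ (1:ℝ) := (Real.rpow_one r).symm
      _ ≤ r ^ (2 * α) := Real.rpow_le_rpow_of_exponent_ge hr0 hr1 h2α1
  -- continuity of H on [0,1]
  have hHcont : ContinuousOn H (Set.Icc 0 1) := by
    rw [Metric.continuousOn_iff]
    intro b hb ε hε
    refine ⟨(ε / (K + 1)) ^ (2 * α)⁻¹, by positivity, ?_⟩
    intro a ha hd
    rw [Real.dist_eq] at hd ⊢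
    have h1 : |a - b| ^ (2 * α) ≤ ((ε / (K + 1)) ^ (2 * α)⁻¹) ^ (2 * α) :=
      Real.rpow_le_rpow (abs_nonneg _) hd.le h2α0.le
    rw [Real.rpow_inv_rpow (by positivity) (ne_of_gt h2α0)] at h1
    calc |H a - H b| ≤ K * |a - b| ^ (2 * α) := hHol a ha b hb
      _ ≤ K * (ε / (K + 1)) := by
          exact mul_le_mul_of_nonneg_left h1 hK
      _ < ε := by
          rw [mul_div_assoc', div_lt_iff₀ (by positivity)]
          nlinarith
  set f : ℝ → ℝ := fun y => H y * sineB k y with hfdef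
  have hfcont : ContinuousOn f (Set.Icc 0 1) := by
    apply hHcont.mul
    exact (continuous_const.mul (Real.continuous_sin.comp (by continuity))).continuousOn
  -- key pointwise estimate
  set B : ℝ := Real.sqrt 2 * (Real.pi + 1) * K * r ^ (2 * α) with hBdef
  have key : ∀ x ∈ Set.Icc (0:ℝ) 1, ∀ y ∈ Set.Icc (0:ℝ) 1, |x - y| ≤ 1 / M →
      |f x - f y| ≤ B := by
    intro x hx y hy hxy
    have hEx : |sineB k x - sineB k y| ≤ Real.sqrt 2 * (Real.pi * r ^ (2 * α)) := by
      simp only [sineB]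
      rw [← mul_sub, abs_mul, abs_of_nonneg (Real.sqrt_nonneg 2)]
      have h1 : |Real.sin (Real.pi * k * x) - Real.sin (Real.pi * k * y)|
          ≤ Real.pi * k * |x - y| := by
        calc |Real.sin (Real.pi * k * x) - Real.sin (Real.pi * k * y)|
            ≤ |Real.pi * k * x - Real.pi * k * y| := sin_lip _ _
          _ = Real.pi * k * |x - y| := by
              rw [← mul_sub, abs_mul, abs_of_nonneg (by positivity)]
      have h2 : Real.pi * k * |x - y| ≤ Real.pi * r ^ (2 * α) := by
        have : (k:ℝ) * |x - y| ≤ r := by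
          calc (k:ℝ) * |x - y| ≤ (k:ℝ) * (1 / M) :=
              mul_le_mul_of_nonneg_left hxy (by positivity)
            _ = r := by rw [hrdef]; ring
        calc Real.pi * k * |x - y| = Real.pi * ((k:ℝ) * |x - y|) := by ring
          _ ≤ Real.pi * r := mul_le_mul_of_nonneg_left this Real.pi_pos.le
          _ ≤ Real.pi * r ^ (2 * α) := mul_le_mul_of_nonneg_left hrr Real.pi_pos.le
      exact mul_le_mul_of_nonneg_left (h1.trans h2) (Real.sqrt_nonneg 2)
    have hEy : |sineB k y| ≤ Real.sqrt 2 := by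
      simp only [sineB]
      rw [abs_mul, abs_of_nonneg (Real.sqrt_nonneg 2)]
      calc Real.sqrt 2 * |Real.sin (Real.pi * k * y)| ≤ Real.sqrt 2 * 1 :=
          mul_le_mul_of_nonneg_left (Real.abs_sin_le_one _) (Real.sqrt_nonneg 2)
        _ = Real.sqrt 2 := mul_one _
    have hHxy : |H x - H y| ≤ K * r ^ (2 * α) := by
      calc |H x - H y| ≤ K * |x - y| ^ (2 * α) := hHol x hx y hy
        _ ≤ K * r ^ (2 * α) := by
            apply mul_le_mul_of_nonneg_left _ hK
            apply Real.rpow_le_rpow (abs_nonneg _) _ h2α0.le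
            calc |x - y| ≤ 1 / M := hxy
              _ ≤ r := by rw [hrdef]; gcongr
    have hHx : |H x| ≤ K := hbd x hx
    calc |f x - f y| = |H x * (sineB k x - sineB k y) + (H x - H y) * sineB k y| := by
          simp only [hfdef]; ring_nf
      _ ≤ |H x * (sineB k x - sineB k y)| + |(H x - H y) * sineB k y| := abs_add_le _ _
      _ = |H x| * |sineB k x - sineB k y| + |H x - H y| * |sineB k y| := by
          rw [abs_mul, abs_mul]
      _ ≤ K * (Real.sqrt 2 * (Real.pi * r ^ (2 * α))) + (K * r ^ (2 * α)) * Real.sqrt 2 := by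
          exact add_le_add (mul_le_mul hHx hEx (abs_nonneg _) hK)
            (mul_le_mul hHxy hEy (abs_nonneg _) (by positivity))
      _ = B := by rw [hBdef]; ring
  -- nodes
  set a : ℕ → ℝ := fun i => (i:ℝ) / M with hadef
  have hmem : ∀ i : ℕ, i ≤ M → a i ∈ Set.Icc (0:ℝ) 1 := by
    intro i hi
    have : (i:ℝ) ≤ M := by exact_mod_cast hi
    constructor
    · positivity
    · rw [hadef]; rw [div_le_one hMR]; exact this
  have hstep : ∀ i : ℕ, a (i+1) - a i = 1 / M := by
    intro i
    simp only [hadef]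
    push_cast
    field_simp
    ring
  have hle : ∀ i : ℕ, a i ≤ a (i+1) := by
    intro i
    have := hstep i
    have : (0:ℝ) < 1 / M := by positivity
    linarith [hstep i]
  have hsub : ∀ i : ℕ, i < M → Set.uIcc (a i) (a (i+1)) ⊆ Set.Icc (0:ℝ) 1 := by
    intro i hi
    rw [Set.uIcc_of_le (hle i)]
    exact Set.Icc_subset_Icc (hmem i (by omega)).1 (hmem (i+1) (by omega)).2
  have hint : ∀ i, i < M → IntervalIntegrable f MeasureTheory.volume (a i) (a (i+1)) :=
    fun i hi => (hfcont.mono (hsub i hi)).intervalIntegrable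
  have hsplit : fourierSineCoef H k = ∑ i ∈ Finset.range M, ∫ y in (a i)..(a (i+1)), f y := by
    rw [intervalIntegral.sum_integral_adjacent_intervals hint]
    have ha0 : a 0 = 0 := by simp [hadef]
    have haM : a M = 1 := by
      simp only [hadef]
      field_simp
    rw [ha0, haM]
    rfl
  have hdisc : discIP M H k = ∑ i ∈ Finset.range M, (1 / (M:ℝ)) * f (a i) := by
    have h0 : discIP M H k = (1 / (M:ℝ)) * ∑ l ∈ Finset.Icc 1 (M - 1), f (a l) := rfl
    rw [h0, ← Finset.mul_sum]
    congr 1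
    have hIco : Finset.Icc 1 (M - 1) = Finset.Ico 1 M := by
      rw [← Finset.Ico_add_one_right_eq_Icc]
      congr 1
      omega
    rw [Finset.range_eq_Ico, Finset.sum_eq_sum_Ico_succ_bot hMpos, hIco]
    have : f (a 0) = 0 := by
      simp [hfdef, hadef, sineB]
    rw [this, zero_add]
  have hB0 : 0 ≤ B := by
    rw [hBdef]
    positivity
  have hterm : ∀ i ∈ Finset.range M,
      |(1 / (M:ℝ)) * f (a i) - ∫ y in (a i)..(a (i+1)), f y| ≤ B * (1 / M) := by
    intro i hi
    rw [Finset.mem_range] at hi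
    have hconst : (1 / (M:ℝ)) * f (a i) = ∫ _ in (a i)..(a (i+1)), f (a i) := by
      rw [intervalIntegral.integral_const, hstep i, smul_eq_mul]
    rw [hconst, ← intervalIntegral.integral_sub (intervalIntegrable_const) (hint i hi)]
    have hbnd : ∀ y ∈ Set.uIoc (a i) (a (i+1)), ‖f (a i) - f y‖ ≤ B := by
      intro y hy
      rw [Set.uIoc_of_le (hle i)] at hy
      have hyIcc : y ∈ Set.Icc (0:ℝ) 1 := by
        constructor
        · exact le_trans (hmem i (by omega)).1 hy.1.le
        · exact le_trans hy.2 (hmem (i+1) (by omega)).2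
      have hdist : |a i - y| ≤ 1 / M := by
        rw [abs_sub_comm, abs_of_nonneg (by linarith [hy.1.le])]
        linarith [hy.2, hstep i]
      exact key (a i) (hmem i (by omega)) y hyIcc hdist
    calc ‖∫ y in (a i)..(a (i+1)), (f (a i) - f y)‖
        ≤ B * |a (i+1) - a i| := intervalIntegral.norm_integral_le_of_norm_le_const hbnd
      _ = B * (1 / M) := by rw [hstep i, abs_of_pos (by positivity)]
  have main : |discIP M H k - fourierSineCoef H k| ≤ B := by
    rw [hdisc, hsplit, ← Finset.sum_sub_distrib]
    calc |∑ i ∈ Finset.range M, ((1 / (M:ℝ)) * f (a i) - ∫ y in (a i)..(a (i+1)), f y)|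
        ≤ ∑ i ∈ Finset.range M, |(1 / (M:ℝ)) * f (a i) - ∫ y in (a i)..(a (i+1)), f y| :=
          Finset.abs_sum_le_sum_abs _ _
      _ ≤ ∑ _i ∈ Finset.range M, B * (1 / M) := Finset.sum_le_sum hterm
      _ = (M:ℝ) * (B * (1 / M)) := by rw [Finset.sum_const, Finset.card_range, nsmul_eq_mul]
      _ = B := by field_simp
  refine main.trans (le_of_eq ?_)
  rw [hBdef, hrdef, Real.div_rpow (by positivity) hMR.le, Real.rpow_neg hMR.le]
  ring
end

section
/- For every ϑ > 0 there exist constants c, C > 0 such that for all h ∈ (0, 1]: c·√h ≤ ∑_{ℓ=1}^{∞} (1 − e^{−ϑπ²ℓ²h}) / (ϑπ²ℓ²) ≤ C·√h. -/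
open Real

namespace TVB

noncomputable def F (a h : ℝ) (ℓ : ℕ) : ℝ :=
  (1 - Real.exp (-(a * ((ℓ : ℝ) + 1) ^ 2 * h))) / (a * ((ℓ : ℝ) + 1) ^ 2)

variable {a h : ℝ}

lemma d_pos (ha : 0 < a) (ℓ : ℕ) : 0 < a * ((ℓ : ℝ) + 1) ^ 2 := by positivity

lemma F_nonneg (ha : 0 < a) (hh : 0 ≤ h) (ℓ : ℕ) : 0 ≤ F a h ℓ := by
  apply div_nonneg _ (d_pos ha ℓ).le
  have : Real.exp (-(a * ((ℓ : ℝ) + 1) ^ 2 * h)) ≤ 1 := by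
    rw [Real.exp_le_one_iff]
    have : 0 ≤ a * ((ℓ : ℝ) + 1) ^ 2 * h := by positivity
    linarith
  linarith

lemma F_le_h (ha : 0 < a) (ℓ : ℕ) : F a h ℓ ≤ h := by
  rw [F, div_le_iff₀ (d_pos ha ℓ)]
  have := Real.add_one_le_exp (-(a * ((ℓ : ℝ) + 1) ^ 2 * h))
  nlinarith [Real.exp_pos (-(a * ((ℓ : ℝ) + 1) ^ 2 * h))]

lemma F_le_inv (ha : 0 < a) (ℓ : ℕ) : F a h ℓ ≤ 1 / (a * ((ℓ : ℝ) + 1) ^ 2) := by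
  rw [F]
  gcongr
  · linarith [Real.exp_pos (-(a * ((ℓ : ℝ) + 1) ^ 2 * h))]

lemma summable_inv (ha : 0 < a) : Summable (fun ℓ : ℕ => 1 / (a * ((ℓ : ℝ) + 1) ^ 2)) := by
  have h1 : Summable (fun n : ℕ => 1 / (n : ℝ) ^ 2) :=
    Real.summable_one_div_nat_pow.mpr one_lt_two
  have h2 : Summable (fun n : ℕ => 1 / ((n : ℝ) + 1) ^ 2) := by
    have := (summable_nat_add_iff 1).mpr h1
    simpa [Nat.cast_add] using this
  have := h2.mul_left (1 / a)
  convert this using 2 with ℓ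
  · rfl
  · rw [one_div_mul_one_div]

lemma summable_F (ha : 0 < a) (hh : 0 ≤ h) : Summable (F a h) :=
  Summable.of_nonneg_of_le (F_nonneg ha hh) (fun ℓ => F_le_inv ha ℓ) (summable_inv ha)

lemma tail_le (ha : 0 < a) (hh : 0 ≤ h) {N : ℕ} (hN : 1 ≤ N) :
    ∑' ℓ : ℕ, F a h (ℓ + N) ≤ 1 / (a * N) := by
  have hNR : (1 : ℝ) ≤ (N : ℝ) := by exact_mod_cast hN
  have hsum : Summable (fun ℓ : ℕ => F a h (ℓ + N)) :=
    (summable_nat_add_iff N).mpr (summable_F ha hh)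
  apply Summable.tsum_le_of_sum_le hsum
  intro s
  obtain ⟨m, hm⟩ := s.exists_nat_subset_range
  have key : ∀ x : ℝ, 1 ≤ x → 1 / (a * (x + 1) ^ 2) ≤ 1 / (a * x) - 1 / (a * (x + 1)) := by
    intro x hx
    have h1 : 1 / (a * x) - 1 / (a * (x + 1)) = 1 / (a * (x * (x + 1))) := by
      field_simp
      ring
    rw [h1]
    apply one_div_le_one_div_of_le (by positivity)
    nlinarith
  calc ∑ i ∈ s, F a h (i + N) ≤ ∑ i ∈ Finset.range m, F a h (i + N) :=
        Finset.sum_le_sum_of_subset_of_nonneg hm (fun i _ _ => F_nonneg ha hh _)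
    _ ≤ ∑ i ∈ Finset.range m,
          (1 / (a * ((i : ℝ) + N)) - 1 / (a * (((i : ℝ) + N) + 1))) := by
        apply Finset.sum_le_sum
        intro i _
        have h2 : ((i + N : ℕ) : ℝ) + 1 = ((i : ℝ) + N) + 1 := by push_cast; ring
        have := F_le_inv (h := h) ha (i + N)
        rw [h2] at this
        exact this.trans (key _ (by have : (0:ℝ) ≤ i := Nat.cast_nonneg i; linarith))
    _ ≤ 1 / (a * N) := by
        have e : ∀ i : ℕ, (1 / (a * ((i : ℝ) + N)) - 1 / (a * (((i : ℝ) + N) + 1)))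
            = (fun j : ℕ => 1 / (a * ((j : ℝ) + N))) i
              - (fun j : ℕ => 1 / (a * ((j : ℝ) + N))) (i + 1) := by
          intro i
          simp only []
          push_cast
          ring_nf
        rw [Finset.sum_congr rfl (fun i _ => e i), Finset.sum_range_sub']
        simp only [Nat.cast_zero, zero_add]
        have : 0 ≤ 1 / (a * ((m : ℝ) + N)) := by positivity
        linarith

lemma upper (ha : 0 < a) (hh0 : 0 < h) (hh1 : h ≤ 1) :
    ∑' ℓ : ℕ, F a h ℓ ≤ (2 / Real.sqrt a + 1) * Real.sqrt h := by
  set sa := Real.sqrt a with hsa_def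
  set sh := Real.sqrt h with hsh_def
  have hsa : 0 < sa := Real.sqrt_pos.mpr ha
  have hsh : 0 < sh := Real.sqrt_pos.mpr hh0
  have hsa2 : sa ^ 2 = a := Real.sq_sqrt ha.le
  have hsh2 : sh ^ 2 = h := Real.sq_sqrt hh0.le
  have hsh1 : sh ≤ 1 := by
    rw [hsh_def]
    calc Real.sqrt h ≤ Real.sqrt 1 := Real.sqrt_le_sqrt hh1
      _ = 1 := Real.sqrt_one
  have hmul : Real.sqrt (a * h) = sa * sh := Real.sqrt_mul ha.le h
  set N : ℕ := ⌊1 / (sa * sh)⌋₊ + 1 with hN_def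
  have hN1 : 1 ≤ N := Nat.le_add_left 1 _
  have hNge : 1 / (sa * sh) ≤ (N : ℝ) := by
    have := Nat.lt_floor_add_one (1 / (sa * sh))
    rw [hN_def]
    push_cast
    linarith
  have hNle : (N : ℝ) ≤ 1 / (sa * sh) + 1 := by
    have := Nat.floor_le (show (0:ℝ) ≤ 1 / (sa * sh) by positivity)
    rw [hN_def]
    push_cast
    linarith
  have hsum := summable_F ha hh0.le
  have hsplit := Summable.sum_add_tsum_nat_add N hsum
  rw [← hsplit]
  have hhead : ∑ i ∈ Finset.range N, F a h i ≤ (N : ℝ) * h := by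
    calc ∑ i ∈ Finset.range N, F a h i ≤ ∑ _i ∈ Finset.range N, h :=
          Finset.sum_le_sum (fun i _ => F_le_h ha i)
      _ = (N : ℝ) * h := by rw [Finset.sum_const, Finset.card_range]; simp
  have htail : ∑' ℓ : ℕ, F a h (ℓ + N) ≤ sa * sh / a := by
    have h1 := tail_le ha hh0.le hN1
    have h2 : 1 / (a * N) ≤ sa * sh / a := by
      rw [div_le_div_iff₀ (by positivity) ha, one_mul]
      have : 1 ≤ sa * sh * (N:ℝ) := by
        rw [div_le_iff₀ (by positivity)] at hNge
        linarith
      nlinarith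
    linarith
  have harith : (N : ℝ) * h + sa * sh / a ≤ (2 / sa + 1) * sh := by
    have e1 : (1 / (sa * sh) + 1) * h + sa * sh / a = (2 / sa + 1) * sh + (h - sh) := by
      rw [← hsa2, ← hsh2]
      field_simp
      ring
    have hh_le : h ≤ sh := by nlinarith
    nlinarith
  linarith

lemma lower (ha : 0 < a) (hh0 : 0 < h) (hh1 : h ≤ 1) :
    min ((1 - Real.exp (-1)) / a) (Real.exp (-1) / (2 * Real.sqrt a)) * Real.sqrt h
      ≤ ∑' ℓ : ℕ, F a h ℓ := by
  set sa := Real.sqrt a with hsa_def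
  set sh := Real.sqrt h with hsh_def
  have hsa : 0 < sa := Real.sqrt_pos.mpr ha
  have hsh : 0 < sh := Real.sqrt_pos.mpr hh0
  have hsa2 : sa ^ 2 = a := Real.sq_sqrt ha.le
  have hsh2 : sh ^ 2 = h := Real.sq_sqrt hh0.le
  have hsh1 : sh ≤ 1 := by
    rw [hsh_def]
    calc Real.sqrt h ≤ Real.sqrt 1 := Real.sqrt_le_sqrt hh1
      _ = 1 := Real.sqrt_one
  have he : (0:ℝ) < Real.exp (-1) := Real.exp_pos _
  have he1 : Real.exp (-1) < 1 := by
    rw [Real.exp_lt_one_iff]; norm_num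
  have hsum := summable_F ha hh0.le
  rcases le_or_gt 1 (a * h) with hcase | hcase
  · -- a*h ≥ 1 : use first term
    have hF0 : F a h 0 ≤ ∑' ℓ : ℕ, F a h ℓ :=
      Summable.le_tsum hsum 0 (fun j _ => F_nonneg ha hh0.le j)
    have hF0eq : F a h 0 = (1 - Real.exp (-(a * h))) / a := by
      simp [F]
    have hexp : Real.exp (-(a * h)) ≤ Real.exp (-1) := by
      apply Real.exp_le_exp.mpr
      linarith
    have h1 : (1 - Real.exp (-1)) / a ≤ F a h 0 := by
      rw [hF0eq]
      gcongr
    calc min ((1 - Real.exp (-1)) / a) (Real.exp (-1) / (2 * sa)) * sh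
        ≤ ((1 - Real.exp (-1)) / a) * 1 := by
          apply mul_le_mul (min_le_left _ _) hsh1 hsh.le (div_nonneg (by linarith) ha.le)
      _ = (1 - Real.exp (-1)) / a := mul_one _
      _ ≤ F a h 0 := h1
      _ ≤ _ := hF0
  · -- a*h < 1
    set x : ℝ := 1 / (sa * sh) with hx_def
    have hx1 : 1 < x := by
      rw [hx_def, lt_div_iff₀ (by positivity), one_mul]
      have e : sa * sh = Real.sqrt (a * h) := (Real.sqrt_mul ha.le h).symm
      rw [e]
      calc Real.sqrt (a * h) < Real.sqrt 1 := by
            apply Real.sqrt_lt_sqrt (by positivity) hcase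
        _ = 1 := Real.sqrt_one
    set M : ℕ := ⌊x⌋₊ with hM_def
    have hM1 : 1 ≤ M := Nat.le_floor (by exact_mod_cast hx1.le)
    have hMle : (M : ℝ) ≤ x := Nat.floor_le (by linarith)
    have hMge : x / 2 ≤ (M : ℝ) := by
      rcases le_or_gt x 2 with h2 | h2
      · have : (1:ℝ) ≤ (M:ℝ) := by exact_mod_cast hM1
        linarith
      · have := Nat.sub_one_lt_floor x
        linarith
    have hterm : ∀ ℓ ∈ Finset.range M, Real.exp (-1) * h ≤ F a h ℓ := by
      intro ℓ hℓ
      have hℓM : (ℓ : ℝ) + 1 ≤ (M : ℝ) := by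
        rw [Finset.mem_range] at hℓ
        exact_mod_cast Nat.succ_le_of_lt hℓ
      set t : ℝ := a * ((ℓ : ℝ) + 1) ^ 2 * h with ht_def
      have ht0 : 0 < t := by positivity
      have hxsq : a * x ^ 2 * h = 1 := by
        rw [hx_def, ← hsa2, ← hsh2]
        field_simp
      have ht1 : t ≤ 1 := by
        have h1 : (0:ℝ) ≤ (ℓ : ℝ) + 1 := by positivity
        have h2 : (ℓ : ℝ) + 1 ≤ x := hℓM.trans hMle
        have hsq : ((ℓ : ℝ) + 1) ^ 2 ≤ x ^ 2 := by nlinarith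
        have h3 : a * ((ℓ : ℝ) + 1) ^ 2 * h ≤ a * x ^ 2 * h :=
          mul_le_mul_of_nonneg_right (mul_le_mul_of_nonneg_left hsq ha.le) hh0.le
        rw [ht_def]
        linarith
      have hlow : Real.exp (-1) * t ≤ 1 - Real.exp (-t) := by
        have h1 := Real.add_one_le_exp t
        have h2 : Real.exp (-t) * Real.exp t = 1 := by
          rw [← Real.exp_add]; simp
        have h3 : Real.exp (-1) ≤ Real.exp (-t) := by
          apply Real.exp_le_exp.mpr; linarith
        nlinarith [Real.exp_pos (-t)]
      have : Real.exp (-1) * t / (a * ((ℓ : ℝ) + 1) ^ 2) ≤ F a h ℓ := by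
        rw [F, ← ht_def]
        gcongr
      calc Real.exp (-1) * h = Real.exp (-1) * t / (a * ((ℓ : ℝ) + 1) ^ 2) := by
            rw [ht_def]; field_simp
        _ ≤ F a h ℓ := this
    have hsumM : (M : ℝ) * (Real.exp (-1) * h) ≤ ∑ ℓ ∈ Finset.range M, F a h ℓ := by
      calc (M : ℝ) * (Real.exp (-1) * h)
          = ∑ _ℓ ∈ Finset.range M, Real.exp (-1) * h := by
            rw [Finset.sum_const, Finset.card_range]; simp
        _ ≤ _ := Finset.sum_le_sum hterm
    have hsle : ∑ ℓ ∈ Finset.range M, F a h ℓ ≤ ∑' ℓ : ℕ, F a h ℓ :=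
      Summable.sum_le_tsum _ (fun ℓ _ => F_nonneg ha hh0.le ℓ) hsum
    have hfin : min ((1 - Real.exp (-1)) / a) (Real.exp (-1) / (2 * sa)) * sh
        ≤ (M : ℝ) * (Real.exp (-1) * h) := by
      have e1 : (x / 2) * (Real.exp (-1) * h) = (Real.exp (-1) / (2 * sa)) * sh := by
        rw [hx_def, ← hsh2]
        field_simp
      have h2 : min ((1 - Real.exp (-1)) / a) (Real.exp (-1) / (2 * sa)) * sh
          ≤ (Real.exp (-1) / (2 * sa)) * sh :=
        mul_le_mul_of_nonneg_right (min_le_right _ _) hsh.le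
      have h3 : (x / 2) * (Real.exp (-1) * h) ≤ (M : ℝ) * (Real.exp (-1) * h) := by
        apply mul_le_mul_of_nonneg_right hMge (by positivity)
      linarith
    linarith

end TVB

/-- Temporal variance bound for the stationary stochastic heat equation: for every `ϑ > 0`
there are constants `c, C > 0` such that for all `h ∈ (0,1]`,
`c √h ≤ ∑_{ℓ≥1} (1 − e^{−ϑπ²ℓ²h})/(ϑπ²ℓ²) ≤ C √h`. -/
theorem temporal_variance_bound (ϑ : ℝ) (hϑ : 0 < ϑ) :
    ∃ c > (0 : ℝ), ∃ C > (0 : ℝ), ∀ h ∈ Set.Ioc (0 : ℝ) 1,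
      c * Real.sqrt h
          ≤ (∑' ℓ : ℕ, (1 - Real.exp (-(ϑ * π ^ 2 * ((ℓ : ℝ) + 1) ^ 2 * h)))
              / (ϑ * π ^ 2 * ((ℓ : ℝ) + 1) ^ 2))
        ∧ (∑' ℓ : ℕ, (1 - Real.exp (-(ϑ * π ^ 2 * ((ℓ : ℝ) + 1) ^ 2 * h)))
              / (ϑ * π ^ 2 * ((ℓ : ℝ) + 1) ^ 2)) ≤ C * Real.sqrt h := by
  have hpi : (0 : ℝ) < π := Real.pi_pos
  set a : ℝ := ϑ * π ^ 2 with ha_def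
  have ha : 0 < a := by positivity
  have he : (0 : ℝ) < Real.exp (-1) := Real.exp_pos _
  have he1 : Real.exp (-1) < 1 := by rw [Real.exp_lt_one_iff]; norm_num
  have hsa : 0 < Real.sqrt a := Real.sqrt_pos.mpr ha
  refine ⟨min ((1 - Real.exp (-1)) / a) (Real.exp (-1) / (2 * Real.sqrt a)), ?_,
    2 / Real.sqrt a + 1, by positivity, ?_⟩
  · exact lt_min (div_pos (by linarith) ha) (by positivity)
  · rintro h ⟨hh0, hh1⟩
    have e : (∑' ℓ : ℕ, (1 - Real.exp (-(ϑ * π ^ 2 * ((ℓ : ℝ) + 1) ^ 2 * h)))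
        / (ϑ * π ^ 2 * ((ℓ : ℝ) + 1) ^ 2)) = ∑' ℓ : ℕ, TVB.F a h ℓ := rfl
    rw [e]
    exact ⟨TVB.lower ha hh0 hh1, TVB.upper ha hh0 hh1⟩
end

section
/- Let ϑ > 0 and b ∈ (0, 1/2). There exists a constant C > 0 such that for all t > 0 and all x, y ∈ [b, 1−b]: |∑_{ℓ=0}^{∞} e^{−ϑπ²(2ℓ+1)²t} · (sin(π(2ℓ+1)x) − sin(π(2ℓ+1)y)) / (2ℓ+1)| ≤ C·|x − y|. -/
open Real

private lemma cos_sum_id' (x : ℝ) (N : ℕ) :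
    2 * Real.sin (π * x) * (∑ ℓ ∈ Finset.range N, Real.cos (π * (2 * (ℓ:ℝ) + 1) * x))
      = Real.sin (2 * (N:ℝ) * π * x) := by
  induction N with
  | zero => simp
  | succ n ih =>
    rw [Finset.sum_range_succ, mul_add, ih]
    have h := Real.sin_sub_sin (2 * ((n:ℝ)+1) * π * x) (2 * (n:ℝ) * π * x)
    push_cast
    rw [show (2 * ((n:ℝ)+1) * π * x - 2 * (n:ℝ) * π * x)/2 = π * x by ring,
      show (2 * ((n:ℝ)+1) * π * x + 2 * (n:ℝ) * π * x)/2 = π * (2*(n:ℝ)+1) * x by ring] at h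
    nlinarith [h]

private lemma sin_lower' (b x : ℝ) (hb : b ∈ Set.Ioo (0:ℝ) (1/2)) (hx : x ∈ Set.Icc b (1-b)) :
    Real.sin (π * b) ≤ Real.sin (π * x) := by
  obtain ⟨hb0, hb2⟩ := hb
  obtain ⟨hx1, hx2⟩ := hx
  have hπ := Real.pi_pos
  have key : ∀ z : ℝ, b ≤ z → z ≤ 1/2 → Real.sin (π * b) ≤ Real.sin (π * z) := by
    intro z h1 h2
    apply Real.strictMonoOn_sin.monotoneOn ?_ ?_ (by nlinarith)
    · constructor <;> nlinarith
    · constructor <;> nlinarith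
  rcases le_total x (1/2) with h | h
  · exact key x hx1 h
  · have : Real.sin (π * x) = Real.sin (π * (1 - x)) := by
      rw [show π * (1-x) = π - π * x by ring, Real.sin_pi_sub]
    rw [this]
    exact key (1-x) (by linarith) (by linarith)

private lemma abel_bound' (e g : ℕ → ℝ) (B : ℝ)
    (he : ∀ i, e (i+1) ≤ e i) (he0 : ∀ i, 0 ≤ e i)
    (hq : ∀ N, |∑ i ∈ Finset.range N, g i| ≤ B) (n : ℕ) :
    |∑ i ∈ Finset.range n, e i * g i| ≤ B * e 0 := by
  have habel := Finset.sum_range_by_parts e g n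
  simp only [smul_eq_mul] at habel
  rw [habel]
  calc |e (n-1) * (∑ i ∈ Finset.range n, g i)
          - ∑ i ∈ Finset.range (n-1), (e (i+1) - e i) * ∑ j ∈ Finset.range (i+1), g j|
      ≤ |e (n-1) * (∑ i ∈ Finset.range n, g i)|
          + |∑ i ∈ Finset.range (n-1), (e (i+1) - e i) * ∑ j ∈ Finset.range (i+1), g j| :=
        abs_sub _ _
    _ ≤ e (n-1) * B + ∑ i ∈ Finset.range (n-1), (e i - e (i+1)) * B := by
        gcongr
        · rw [abs_mul, abs_of_nonneg (he0 _)]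
          exact mul_le_mul_of_nonneg_left (hq n) (he0 _)
        · refine (Finset.abs_sum_le_sum_abs _ _).trans ?_
          apply Finset.sum_le_sum
          intro i _
          rw [abs_mul, abs_sub_comm, abs_of_nonneg (by linarith [he i])]
          exact mul_le_mul_of_nonneg_left (hq (i+1)) (by linarith [he i])
    _ = e (n-1) * B + (e 0 - e (n-1)) * B := by
        rw [← Finset.sum_mul, Finset.sum_range_sub' e (n-1)]
    _ = B * e 0 := by ring

set_option maxHeartbeats 1000000 in
/-- Uniform-in-time interior Lipschitz bound for the heat semigroup applied to `𝟙`: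
for `ϑ > 0` and `b ∈ (0,1/2)` there is `C > 0` such that for all `t > 0`
and `x, y ∈ [b, 1−b]`,
`|∑_{ℓ≥0} e^{−ϑπ²(2ℓ+1)²t} (sin(π(2ℓ+1)x) − sin(π(2ℓ+1)y))/(2ℓ+1)| ≤ C |x−y|`. -/
theorem heat_semigroup_one_interior_lipschitz (ϑ b : ℝ) (hϑ : 0 < ϑ)
    (hb : b ∈ Set.Ioo (0 : ℝ) (1 / 2)) :
    ∃ C > (0 : ℝ), ∀ t > (0 : ℝ), ∀ x ∈ Set.Icc b (1 - b), ∀ y ∈ Set.Icc b (1 - b),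
      |∑' ℓ : ℕ, Real.exp (-(ϑ * π ^ 2 * (2 * (ℓ : ℝ) + 1) ^ 2 * t))
          * (Real.sin (π * (2 * (ℓ : ℝ) + 1) * x) - Real.sin (π * (2 * (ℓ : ℝ) + 1) * y))
          / (2 * (ℓ : ℝ) + 1)|
        ≤ C * |x - y| := by
  have hπ := Real.pi_pos
  have hb0 := hb.1
  have hb2 := hb.2
  set s : ℝ := Real.sin (π * b) with hs_def
  have hs : 0 < s := Real.sin_pos_of_pos_of_lt_pi (by positivity) (by nlinarith)
  refine ⟨π / (2 * s), by positivity, ?_⟩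
  intro t ht x hx y hy
  set e : ℕ → ℝ := fun ℓ => Real.exp (-(ϑ * π ^ 2 * (2 * (ℓ:ℝ) + 1) ^ 2 * t)) with he_def
  have he_pos : ∀ ℓ, 0 < e ℓ := fun ℓ => Real.exp_pos _
  have he_le1 : ∀ ℓ, e ℓ ≤ 1 := by
    intro ℓ
    apply Real.exp_le_one_iff.mpr
    have : (0:ℝ) ≤ ϑ * π ^ 2 * (2 * (ℓ:ℝ) + 1) ^ 2 * t := by positivity
    linarith
  have he_dec : ∀ ℓ, e (ℓ+1) ≤ e ℓ := by
    intro ℓ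
    apply Real.exp_le_exp.mpr
    have hc : (0:ℝ) ≤ (ℓ:ℝ) := Nat.cast_nonneg ℓ
    have h2 : (0:ℝ) < ϑ * π ^ 2 * t := by positivity
    push_cast
    nlinarith
  have he_sum : Summable e := by
    apply Summable.of_nonneg_of_le (fun ℓ => (he_pos ℓ).le)
      (f := fun ℓ => Real.exp (-(ϑ * π ^ 2 * t)) ^ ℓ)
    · intro ℓ
      rw [← Real.exp_nat_mul]
      apply Real.exp_le_exp.mpr
      have h2 : (0:ℝ) < ϑ * π ^ 2 * t := by positivity
      have hc : (0:ℝ) ≤ (ℓ:ℝ) := Nat.cast_nonneg ℓ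
      have h3 : (ℓ:ℝ) ≤ (2 * (ℓ:ℝ) + 1) ^ 2 := by nlinarith
      nlinarith [mul_le_mul_of_nonneg_left h3 h2.le]
    · exact summable_geometric_of_lt_one (Real.exp_nonneg _)
        (Real.exp_lt_one_iff.mpr (neg_lt_zero.mpr (by positivity)))
  -- summability of the sine terms at any point
  have hterm_sum : ∀ z : ℝ, Summable (fun ℓ : ℕ =>
      e ℓ * Real.sin (π * (2 * (ℓ:ℝ) + 1) * z) / (2 * (ℓ:ℝ) + 1)) := by
    intro z
    apply Summable.of_abs
    apply Summable.of_nonneg_of_le (fun ℓ => abs_nonneg _) ?_ he_sum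
    intro ℓ
    have hc : (1:ℝ) ≤ 2 * (ℓ:ℝ) + 1 := by
      have := Nat.cast_nonneg (α := ℝ) ℓ; linarith
    have hsin : |Real.sin (π * (2 * (ℓ:ℝ) + 1) * z)| ≤ 1 := Real.abs_sin_le_one _
    rw [abs_div, abs_mul, abs_of_pos (he_pos ℓ), abs_of_pos (by linarith : (0:ℝ) < 2*(ℓ:ℝ)+1),
      div_le_iff₀ (by linarith : (0:ℝ) < 2*(ℓ:ℝ)+1)]
    nlinarith [(he_pos ℓ).le, mul_le_mul_of_nonneg_left hsin (he_pos ℓ).le]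
  -- summability of the cosine terms at any point
  have hcos_sum : ∀ z : ℝ, Summable (fun ℓ : ℕ =>
      e ℓ * Real.cos (π * (2 * (ℓ:ℝ) + 1) * z)) := by
    intro z
    apply Summable.of_abs
    apply Summable.of_nonneg_of_le (fun ℓ => abs_nonneg _) ?_ he_sum
    intro ℓ
    have hcos : |Real.cos (π * (2 * (ℓ:ℝ) + 1) * z)| ≤ 1 := Real.abs_cos_le_one _
    rw [abs_mul, abs_of_pos (he_pos ℓ)]
    nlinarith [(he_pos ℓ).le, mul_le_mul_of_nonneg_left hcos (he_pos ℓ).le]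
  -- uniform bound on partial sums of cosines in the interior
  have hq : ∀ z ∈ Set.Icc b (1-b), ∀ N : ℕ,
      |∑ ℓ ∈ Finset.range N, Real.cos (π * (2 * (ℓ:ℝ) + 1) * z)| ≤ 1 / (2*s) := by
    intro z hz N
    have hid := cos_sum_id' z N
    have hsz : s ≤ Real.sin (π * z) := sin_lower' b z ⟨hb0, hb2⟩ hz
    set Q := ∑ ℓ ∈ Finset.range N, Real.cos (π * (2 * (ℓ:ℝ) + 1) * z) with hQ
    have h1 : |Real.sin (2 * (N:ℝ) * π * z)| ≤ 1 := Real.abs_sin_le_one _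
    have h2 : |2 * Real.sin (π * z) * Q| ≤ 1 := by rw [hid]; exact h1
    rw [abs_mul, abs_of_pos (by linarith : (0:ℝ) < 2 * Real.sin (π * z))] at h2
    rw [le_div_iff₀ (by linarith : (0:ℝ) < 2*s)]
    nlinarith [abs_nonneg Q]
  -- uniform bound on the cosine series in the interior
  have hDbound : ∀ z ∈ Set.Icc b (1-b),
      |∑' ℓ : ℕ, e ℓ * Real.cos (π * (2 * (ℓ:ℝ) + 1) * z)| ≤ 1 / (2*s) := by
    intro z hz
    have htend := ((hcos_sum z).hasSum.tendsto_sum_nat).abs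
    have hb' : ∀ n : ℕ, |∑ ℓ ∈ Finset.range n, e ℓ * Real.cos (π * (2 * (ℓ:ℝ) + 1) * z)|
        ≤ (1/(2*s)) * e 0 :=
      fun n => abel_bound' e _ (1/(2*s)) he_dec (fun i => (he_pos i).le) (hq z hz) n
    have hlim := le_of_tendsto htend (Filter.Eventually.of_forall hb')
    calc |∑' ℓ : ℕ, e ℓ * Real.cos (π * (2 * (ℓ:ℝ) + 1) * z)| ≤ (1/(2*s)) * e 0 := hlim
      _ ≤ (1/(2*s)) * 1 := by
          have : 0 ≤ 1/(2*s) := by positivity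
          nlinarith [he_le1 0]
      _ = 1/(2*s) := mul_one _
  -- differentiability of the series
  have hderiv : ∀ z : ℝ, HasDerivAt
      (fun w : ℝ => ∑' ℓ : ℕ, e ℓ * Real.sin (π * (2 * (ℓ:ℝ) + 1) * w) / (2 * (ℓ:ℝ) + 1))
      (∑' ℓ : ℕ, e ℓ * (π * Real.cos (π * (2 * (ℓ:ℝ) + 1) * z))) z := by
    intro z
    apply hasDerivAt_tsum (u := fun ℓ : ℕ => π * e ℓ) (he_sum.mul_left π) ?_ ?_ (hterm_sum 0) z
    · intro n w
      have h1 : HasDerivAt (fun w : ℝ => π * (2*(n:ℝ)+1) * w) (π * (2*(n:ℝ)+1)) w := by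
        simpa using (hasDerivAt_id w).const_mul (π * (2*(n:ℝ)+1))
      have h2 := (Real.hasDerivAt_sin (π * (2*(n:ℝ)+1) * w)).comp w h1
      have h3 := (h2.const_mul (e n)).div_const (2*(n:ℝ)+1)
      have hc : (0:ℝ) < 2*(n:ℝ)+1 := by positivity
      convert h3 using 1
      · rfl
      · rfl
      rw [eq_div_iff hc.ne']
      ring
    · intro n w
      rw [Real.norm_eq_abs, abs_mul, abs_of_pos (he_pos n), abs_mul, abs_of_pos hπ]
      have hcos : |Real.cos (π * (2 * (n:ℝ) + 1) * w)| ≤ 1 := Real.abs_cos_le_one _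
      calc e n * (π * |Real.cos (π * (2 * (n:ℝ) + 1) * w)|)
          = (e n * π) * |Real.cos (π * (2 * (n:ℝ) + 1) * w)| := by ring
        _ ≤ (e n * π) * 1 :=
            mul_le_mul_of_nonneg_left hcos (mul_nonneg (he_pos n).le hπ.le)
        _ = π * e n := by ring
  -- bound on the derivative in the interior
  have hder_bound : ∀ z ∈ Set.Icc b (1-b),
      ‖∑' ℓ : ℕ, e ℓ * (π * Real.cos (π * (2 * (ℓ:ℝ) + 1) * z))‖ ≤ π / (2*s) := by
    intro z hz
    have hre : (fun ℓ : ℕ => e ℓ * (π * Real.cos (π * (2 * (ℓ:ℝ) + 1) * z)))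
        = fun ℓ : ℕ => π * (e ℓ * Real.cos (π * (2 * (ℓ:ℝ) + 1) * z)) := by
      funext ℓ; ring
    rw [Real.norm_eq_abs, hre, tsum_mul_left, abs_mul, abs_of_pos hπ]
    have := hDbound z hz
    calc π * |∑' ℓ : ℕ, e ℓ * Real.cos (π * (2 * (ℓ:ℝ) + 1) * z)| ≤ π * (1/(2*s)) := by
          nlinarith
      _ = π / (2*s) := by ring
  -- mean value inequality
  have key := (convex_Icc b (1-b)).norm_image_sub_le_of_norm_hasDerivWithin_le
    (f := fun w : ℝ => ∑' ℓ : ℕ, e ℓ * Real.sin (π * (2 * (ℓ:ℝ) + 1) * w) / (2 * (ℓ:ℝ) + 1))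
    (f' := fun z : ℝ => ∑' ℓ : ℕ, e ℓ * (π * Real.cos (π * (2 * (ℓ:ℝ) + 1) * z)))
    (fun z _ => (hderiv z).hasDerivWithinAt) hder_bound hy hx
  -- rewrite the goal
  have hsplit : ∑' ℓ : ℕ, Real.exp (-(ϑ * π ^ 2 * (2 * (ℓ : ℝ) + 1) ^ 2 * t))
          * (Real.sin (π * (2 * (ℓ : ℝ) + 1) * x) - Real.sin (π * (2 * (ℓ : ℝ) + 1) * y))
          / (2 * (ℓ : ℝ) + 1)
      = (∑' ℓ : ℕ, e ℓ * Real.sin (π * (2 * (ℓ:ℝ) + 1) * x) / (2 * (ℓ:ℝ) + 1))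
        - ∑' ℓ : ℕ, e ℓ * Real.sin (π * (2 * (ℓ:ℝ) + 1) * y) / (2 * (ℓ:ℝ) + 1) := by
    rw [← Summable.tsum_sub (hterm_sum x) (hterm_sum y)]
    exact tsum_congr fun ℓ => by rw [he_def]; ring
  rw [hsplit]
  simpa [Real.norm_eq_abs] using key
end

section
/- Let ϑ > 0 and b ∈ (0, 1/2). There exists a constant C > 0 such that for all t > 0, Δ > 0 and x ∈ [b, 1−b]: |∑_{ℓ=0}^{∞} e^{−ϑπ²(2ℓ+1)²t} · (1 − e^{−ϑπ²(2ℓ+1)²Δ}) · sin(π(2ℓ+1)x) / (2ℓ+1)| ≤ C·√Δ. -/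
open Real Filter


/- ### Auxiliary elementary inequalities -/

lemma aux_one_sub_exp_neg_le (x : ℝ) : 1 - Real.exp (-x) ≤ x := by
  have h := Real.add_one_le_exp (-x); linarith

lemma aux_mul_exp_neg_le_one (u : ℝ) : u * Real.exp (-u) ≤ 1 := by
  rcases le_total u 0 with h | h
  · have h1 := Real.exp_pos (-u)
    nlinarith
  · have h2 : u ≤ Real.exp u := by have := Real.add_one_le_exp u; linarith
    have h3 : Real.exp (-u) * Real.exp u = 1 := by rw [← Real.exp_add]; simp
    have h4 := Real.exp_pos (-u)
    nlinarith

/- ### Partial sums of odd sines -/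

lemma aux_sin_partial_sum (θ : ℝ) (n : ℕ) :
    (∑ ℓ ∈ Finset.range n, Real.sin ((2 * (ℓ:ℝ) + 1) * θ)) * Real.sin θ
      = Real.sin ((n:ℝ) * θ) ^ 2 := by
  induction n with
  | zero => simp
  | succ n ih =>
    rw [Finset.sum_range_succ, add_mul, ih]
    have harg : (2 * (n:ℝ) + 1) * θ = (n:ℝ) * θ + ((n:ℝ) * θ + θ) := by ring
    have harg2 : ((n:ℝ) + 1) * θ = (n:ℝ) * θ + θ := by ring
    push_cast
    rw [harg, harg2, Real.sin_add ((n:ℝ)*θ) ((n:ℝ)*θ + θ), Real.sin_add ((n:ℝ)*θ) θ,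
      Real.cos_add ((n:ℝ)*θ) θ]
    have h1 := Real.sin_sq_add_cos_sq θ
    have h2 := Real.sin_sq_add_cos_sq ((n:ℝ)*θ)
    nlinarith [h1, h2]

lemma aux_sin_lower {b x : ℝ} (hb0 : 0 < b) (hb2 : b < 1/2) (hx1 : b ≤ x) (hx2 : x ≤ 1 - b) :
    Real.sin (π * b) ≤ Real.sin (π * x) := by
  have hπ := Real.pi_pos
  have key : ∀ y : ℝ, b ≤ y → y ≤ 1/2 → Real.sin (π * b) ≤ Real.sin (π * y) := by
    intro y h1 h2
    apply Real.strictMonoOn_sin.monotoneOn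
    · constructor <;> nlinarith
    · constructor <;> nlinarith
    · nlinarith
  rcases le_total x (1/2) with h | h
  · exact key x hx1 h
  · have : Real.sin (π * x) = Real.sin (π * (1 - x)) := by
      rw [show π * (1 - x) = π - π * x by ring, Real.sin_pi_sub]
    rw [this]
    exact key (1 - x) (by linarith) (by linarith)

/- ### Abel summation bound for infinite series -/

lemma aux_abel_tsum_le {f g : ℕ → ℝ} {D T : ℝ}
    (hD : ∀ n, |∑ ℓ ∈ Finset.range n, g ℓ| ≤ D)
    (hf0 : Tendsto f atTop (nhds 0))
    (hT : ∀ n, ∑ ℓ ∈ Finset.range n, |f ℓ - f (ℓ + 1)| ≤ T)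
    (hsum : Summable (fun ℓ => f ℓ * g ℓ)) :
    |∑' ℓ, f ℓ * g ℓ| ≤ D * T := by
  have hD0 : 0 ≤ D := le_trans (abs_nonneg _) (hD 0)
  have key : ∀ n, ∑ ℓ ∈ Finset.range n, f ℓ * g ℓ
      = f n * (∑ ℓ ∈ Finset.range n, g ℓ)
        + ∑ ℓ ∈ Finset.range n, (f ℓ - f (ℓ + 1)) * (∑ j ∈ Finset.range (ℓ + 1), g j) := by
    intro n
    induction n with
    | zero => simp
    | succ n ih =>
      rw [Finset.sum_range_succ, ih, Finset.sum_range_succ (fun ℓ => (f ℓ - f (ℓ+1)) * _),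
        Finset.sum_range_succ g]
      ring
  have hbound : ∀ n, |∑ ℓ ∈ Finset.range n, f ℓ * g ℓ| ≤ |f n| * D + D * T := by
    intro n
    rw [key n]
    calc |f n * (∑ ℓ ∈ Finset.range n, g ℓ)
        + ∑ ℓ ∈ Finset.range n, (f ℓ - f (ℓ + 1)) * (∑ j ∈ Finset.range (ℓ + 1), g j)|
        ≤ |f n * (∑ ℓ ∈ Finset.range n, g ℓ)|
          + |∑ ℓ ∈ Finset.range n, (f ℓ - f (ℓ + 1)) * (∑ j ∈ Finset.range (ℓ + 1), g j)| :=
          abs_add_le _ _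
      _ ≤ |f n| * D + D * T := by
          gcongr ?_ + ?_
          · rw [abs_mul]
            exact mul_le_mul_of_nonneg_left (hD n) (abs_nonneg _)
          · calc |∑ ℓ ∈ Finset.range n, (f ℓ - f (ℓ + 1)) * (∑ j ∈ Finset.range (ℓ + 1), g j)|
                ≤ ∑ ℓ ∈ Finset.range n, |(f ℓ - f (ℓ + 1)) * (∑ j ∈ Finset.range (ℓ + 1), g j)| :=
                Finset.abs_sum_le_sum_abs _ _
              _ ≤ ∑ ℓ ∈ Finset.range n, |f ℓ - f (ℓ + 1)| * D := by
                  apply Finset.sum_le_sum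
                  intro i _
                  rw [abs_mul]
                  exact mul_le_mul_of_nonneg_left (hD (i+1)) (abs_nonneg _)
              _ = (∑ ℓ ∈ Finset.range n, |f ℓ - f (ℓ + 1)|) * D := by rw [Finset.sum_mul]
              _ ≤ T * D := mul_le_mul_of_nonneg_right (hT n) hD0
              _ = D * T := mul_comm _ _
  have h1 : Tendsto (fun n => |∑ ℓ ∈ Finset.range n, f ℓ * g ℓ|) atTop
      (nhds |∑' ℓ, f ℓ * g ℓ|) :=
    (continuous_abs.tendsto _).comp hsum.hasSum.tendsto_sum_nat
  have h2 : Tendsto (fun n => |f n| * D + D * T) atTop (nhds (|(0:ℝ)| * D + D * T)) :=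
    (((continuous_abs.tendsto _).comp hf0).mul_const D).add tendsto_const_nhds
  have := le_of_tendsto_of_tendsto' h1 h2 hbound
  simpa using this

/- ### Summation of `min δ (1/(2ℓ+1)²)` -/

lemma aux_summable_inv_odd_sq : Summable (fun ℓ : ℕ => 1 / (2 * (ℓ:ℝ) + 1) ^ 2) := by
  have h2 : Summable (fun n : ℕ => 1 / ((n:ℝ)) ^ 2) := by
    simpa using Real.summable_one_div_nat_pow.mpr (by norm_num : 1 < 2)
  have h3 : Summable (fun n : ℕ => 1 / (((n:ℕ):ℝ) + 1) ^ 2) := by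
    have := (summable_nat_add_iff (f := fun n : ℕ => 1 / ((n:ℝ)) ^ 2) 1).mpr h2
    simpa [add_comm] using this
  apply Summable.of_nonneg_of_le (fun ℓ => by positivity) _ h3
  intro ℓ
  apply one_div_le_one_div_of_le (by positivity)
  nlinarith [Nat.cast_nonneg (α := ℝ) ℓ]

lemma aux_summable_min_odd {δ : ℝ} (hδ : 0 < δ) :
    Summable (fun ℓ : ℕ => min δ (1 / (2 * (ℓ:ℝ) + 1) ^ 2)) :=
  Summable.of_nonneg_of_le (fun ℓ => le_min hδ.le (by positivity))
    (fun ℓ => min_le_right _ _) aux_summable_inv_odd_sq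

lemma aux_tail_sum_le {δ : ℝ} (hδ : 0 < δ) (N : ℕ) (hN : 1 ≤ N) :
    ∑' ℓ : ℕ, min δ (1 / (2 * ((ℓ:ℝ) + (N:ℝ)) + 1) ^ 2) ≤ 1 / (4 * N) := by
  have hsum : Summable (fun ℓ : ℕ => min δ (1 / (2 * ((ℓ:ℝ) + (N:ℝ)) + 1) ^ 2)) := by
    have := (summable_nat_add_iff
      (f := fun ℓ : ℕ => min δ (1 / (2 * (ℓ:ℝ) + 1) ^ 2)) N).mpr (aux_summable_min_odd hδ)
    simpa [Nat.cast_add] using this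
  apply hsum.tsum_le_of_sum_range_le
  intro n
  have hNR : (1:ℝ) ≤ (N:ℝ) := by exact_mod_cast hN
  calc ∑ ℓ ∈ Finset.range n, min δ (1 / (2 * ((ℓ:ℝ) + (N:ℝ)) + 1) ^ 2)
      ≤ ∑ ℓ ∈ Finset.range n,
        ((fun i : ℕ => -(1/4) * (1 / ((i:ℝ) + (N:ℝ)))) (ℓ+1)
          - (fun i : ℕ => -(1/4) * (1 / ((i:ℝ) + (N:ℝ)))) ℓ) := by
        apply Finset.sum_le_sum
        intro i _
        have hi : (0:ℝ) ≤ (i:ℝ) := Nat.cast_nonneg i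
        have hm : (1:ℝ) ≤ (i:ℝ) + (N:ℝ) := by linarith
        have key : (1:ℝ) / (2 * ((i:ℝ) + (N:ℝ)) + 1) ^ 2
            ≤ (1/4) * (1 / ((i:ℝ) + (N:ℝ)) - 1 / ((i:ℝ) + (N:ℝ) + 1)) := by
          have h1 : (1/4 : ℝ) * (1 / ((i:ℝ) + (N:ℝ)) - 1 / ((i:ℝ) + (N:ℝ) + 1))
              = 1 / (4 * ((i:ℝ) + (N:ℝ)) * ((i:ℝ) + (N:ℝ) + 1)) := by
            field_simp; ring
          rw [h1]
          apply one_div_le_one_div_of_le (by positivity)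
          nlinarith
        calc min δ (1 / (2 * ((i:ℝ) + (N:ℝ)) + 1) ^ 2)
            ≤ 1 / (2 * ((i:ℝ) + (N:ℝ)) + 1) ^ 2 := min_le_right _ _
          _ ≤ _ := key
          _ = _ := by push_cast; ring
    _ = -(1/4) * (1 / ((n:ℝ) + (N:ℝ))) - (-(1/4) * (1 / ((0:ℝ) + (N:ℝ)))) := by
        rw [Finset.sum_range_sub (fun i : ℕ => -(1/4) * (1 / ((i:ℝ) + (N:ℝ))))]
        norm_num
    _ ≤ 1 / (4 * N) := by
        have h1 : (0:ℝ) < (n:ℝ) + (N:ℝ) := by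
          have := Nat.cast_nonneg (α := ℝ) n
          linarith
        have h2 : (0:ℝ) < (N:ℝ) := by exact_mod_cast hN
        have h3 : (0:ℝ) ≤ 1 / ((n:ℝ) + (N:ℝ)) := by positivity
        have : -(1/4 : ℝ) * (1 / ((n:ℝ) + (N:ℝ))) ≤ 0 := by nlinarith
        have h4 : -(-(1/4 : ℝ) * (1 / ((0:ℝ) + (N:ℝ)))) = 1 / (4 * (N:ℝ)) := by
          field_simp
          ring
        linarith [h4]

lemma aux_tsum_min_le {δ : ℝ} (hδ : 0 < δ) :
    ∑' ℓ : ℕ, min δ (1 / (2 * (ℓ:ℝ) + 1) ^ 2) ≤ 2 * Real.sqrt δ := by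
  have hs : 0 < Real.sqrt δ := Real.sqrt_pos.mpr hδ
  have hsq : Real.sqrt δ ^ 2 = δ := Real.sq_sqrt hδ.le
  have hsummable := aux_summable_min_odd hδ
  have split : ∀ N : ℕ, 1 ≤ N →
      ∑' ℓ : ℕ, min δ (1 / (2 * (ℓ:ℝ) + 1) ^ 2) ≤ (N:ℝ) * δ + 1 / (4 * N) := by
    intro N hN
    rw [← Summable.sum_add_tsum_nat_add N hsummable]
    gcongr ?_ + ?_
    · calc ∑ ℓ ∈ Finset.range N, min δ (1 / (2 * (ℓ:ℝ) + 1) ^ 2)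
          ≤ ∑ _ℓ ∈ Finset.range N, δ :=
            Finset.sum_le_sum (fun i _ => min_le_left _ _)
        _ = (N:ℝ) * δ := by rw [Finset.sum_const]; simp [mul_comm]
    · have := aux_tail_sum_le hδ N hN
      calc ∑' ℓ : ℕ, min δ (1 / (2 * ((ℓ + N : ℕ):ℝ) + 1) ^ 2)
          = ∑' ℓ : ℕ, min δ (1 / (2 * ((ℓ:ℝ) + (N:ℝ)) + 1) ^ 2) := by
            apply tsum_congr; intro ℓ; push_cast; ring_nf
        _ ≤ 1 / (4 * N) := this
  rcases le_total (1:ℝ) δ with h1 | h1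
  · have h3 : (1:ℝ) ≤ Real.sqrt δ := by
      nlinarith [Real.sqrt_nonneg δ]
    rw [← Summable.sum_add_tsum_nat_add 1 hsummable]
    have hhead : ∑ ℓ ∈ Finset.range 1, min δ (1 / (2 * (ℓ:ℝ) + 1) ^ 2) ≤ 1 := by
      simp
    have htail : ∑' ℓ : ℕ, min δ (1 / (2 * ((ℓ + 1 : ℕ):ℝ) + 1) ^ 2) ≤ 1/4 := by
      have := aux_tail_sum_le hδ 1 le_rfl
      calc ∑' ℓ : ℕ, min δ (1 / (2 * ((ℓ + 1 : ℕ):ℝ) + 1) ^ 2)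
          = ∑' ℓ : ℕ, min δ (1 / (2 * ((ℓ:ℝ) + ((1:ℕ):ℝ)) + 1) ^ 2) := by
            apply tsum_congr; intro ℓ; push_cast; ring_nf
        _ ≤ 1 / (4 * (1:ℕ)) := this
        _ = 1/4 := by norm_num
    linarith
  · set N := ⌈1 / (2 * Real.sqrt δ)⌉₊ with hNdef
    have hpos : (0:ℝ) < 1 / (2 * Real.sqrt δ) := by positivity
    have hN1 : 1 ≤ N := Nat.one_le_iff_ne_zero.mpr (by
      simp only [hNdef, ne_eq, Nat.ceil_eq_zero, not_le]
      exact hpos)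
    have hNle : (N:ℝ) ≤ 1 / (2 * Real.sqrt δ) + 1 := le_of_lt (Nat.ceil_lt_add_one hpos.le)
    have hNge : 1 / (2 * Real.sqrt δ) ≤ (N:ℝ) := Nat.le_ceil _
    have h2 := split N hN1
    have hδs : δ ≤ Real.sqrt δ := by nlinarith
    have hhead : (N:ℝ) * δ ≤ (3/2) * Real.sqrt δ := by
      have : (N:ℝ) * δ ≤ (1 / (2 * Real.sqrt δ) + 1) * δ := by nlinarith
      have hx : (1 / (2 * Real.sqrt δ)) * δ = Real.sqrt δ / 2 := by
        rw [div_mul_eq_mul_div, one_mul]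
        rw [eq_div_iff (by norm_num : (2:ℝ) ≠ 0)]
        field_simp
        nlinarith
      nlinarith [hx]
    have htail : 1 / (4 * (N:ℝ)) ≤ Real.sqrt δ / 2 := by
      rw [div_le_div_iff₀ (by positivity) (by norm_num)]
      have : (0:ℝ) < (N:ℝ) := by exact_mod_cast hN1
      have hx : Real.sqrt δ * (1 / (2 * Real.sqrt δ)) = 1/2 := by
        field_simp
      nlinarith [mul_le_mul_of_nonneg_left hNge (by positivity : (0:ℝ) ≤ Real.sqrt δ)]
    linarith

/- ### The key variation bound -/

set_option maxHeartbeats 1000000 in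
lemma aux_var_bound {α δ k : ℝ} (hα : 0 < α) (hδ : 0 < δ) (hk : 1 ≤ k) :
    |Real.exp (-(α * k ^ 2)) * (1 - Real.exp (-(δ * k ^ 2))) / k
      - Real.exp (-(α * (k + 2) ^ 2)) * (1 - Real.exp (-(δ * (k + 2) ^ 2))) / (k + 2)|
      ≤ 34 * min δ (1 / k ^ 2) := by
  have hk0 : 0 < k := lt_of_lt_of_le one_pos hk
  have hk2 : 0 < k + 2 := by linarith
  set A1 := Real.exp (-(α * k ^ 2)) with hA1
  set A2 := Real.exp (-(α * (k + 2) ^ 2)) with hA2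
  set D1 := Real.exp (-(δ * k ^ 2)) with hD1
  set D2 := Real.exp (-(δ * (k + 2) ^ 2)) with hD2
  have hA1p : 0 < A1 := Real.exp_pos _
  have hA2p : 0 < A2 := Real.exp_pos _
  have hD1p : 0 < D1 := Real.exp_pos _
  have hD2p : 0 < D2 := Real.exp_pos _
  have hA1le : A1 ≤ 1 := Real.exp_le_one_iff.mpr (by nlinarith)
  have hA2le : A2 ≤ 1 := Real.exp_le_one_iff.mpr (by nlinarith)
  have hD1le : D1 ≤ 1 := Real.exp_le_one_iff.mpr (by nlinarith)
  have hD2le : D2 ≤ 1 := Real.exp_le_one_iff.mpr (by nlinarith)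
  have hA2leA1 : A2 ≤ A1 := Real.exp_le_exp.mpr (by nlinarith)
  have hD2leD1 : D2 ≤ D1 := Real.exp_le_exp.mpr (by nlinarith)
  have hA2exp : A2 = A1 * Real.exp (-(α * (4 * k + 4))) := by
    rw [hA1, hA2, ← Real.exp_add]; congr 1; ring
  have hD2exp : D2 = D1 * Real.exp (-(δ * (4 * k + 4))) := by
    rw [hD1, hD2, ← Real.exp_add]; congr 1; ring
  have hAA : A1 - A2 ≤ 8 * (α * k) * A1 := by
    have h1 : 1 - Real.exp (-(α * (4 * k + 4))) ≤ α * (4 * k + 4) := aux_one_sub_exp_neg_le _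
    have h2 : A1 - A2 = A1 * (1 - Real.exp (-(α * (4 * k + 4)))) := by rw [hA2exp]; ring
    rw [h2]
    have h3 : A1 * (1 - Real.exp (-(α * (4 * k + 4)))) ≤ A1 * (α * (4 * k + 4)) :=
      mul_le_mul_of_nonneg_left h1 hA1p.le
    nlinarith
  have hDD : D1 - D2 ≤ 8 * (δ * k) * D1 := by
    have h1 : 1 - Real.exp (-(δ * (4 * k + 4))) ≤ δ * (4 * k + 4) := aux_one_sub_exp_neg_le _
    have h2 : D1 - D2 = D1 * (1 - Real.exp (-(δ * (4 * k + 4)))) := by rw [hD2exp]; ring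
    rw [h2]
    have h3 : D1 * (1 - Real.exp (-(δ * (4 * k + 4)))) ≤ D1 * (δ * (4 * k + 4)) :=
      mul_le_mul_of_nonneg_left h1 hD1p.le
    nlinarith
  have hU1 : α * k ^ 2 * A1 ≤ 1 := by
    have := aux_mul_exp_neg_le_one (α * k ^ 2); rw [hA1]; exact this
  have hU2 : δ * k ^ 2 * D1 ≤ 1 := by
    have := aux_mul_exp_neg_le_one (δ * k ^ 2); rw [hD1]; exact this
  have hF1 : 1 - D1 ≤ δ * k ^ 2 := by rw [hD1]; exact aux_one_sub_exp_neg_le _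
  have hF1nn : 0 ≤ 1 - D1 := by linarith
  have hF2nn : 0 ≤ 1 - D2 := by linarith
  have hE2 : 1 - D2 ≤ δ * (k + 2) ^ 2 := by rw [hD2]; exact aux_one_sub_exp_neg_le _
  have hsplit : A1 * (1 - D1) / k - A2 * (1 - D2) / (k + 2)
      = (A1 - A2) * (1 - D1) / k + A2 * (D2 - D1) / k
        + A2 * (1 - D2) * (2 / (k * (k + 2))) := by
    field_simp
    ring
  rw [hsplit]
  have hP1nn : 0 ≤ (A1 - A2) * (1 - D1) / k := by
    apply div_nonneg _ hk0.le
    exact mul_nonneg (by linarith) hF1nn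
  have hP2np : A2 * (D2 - D1) / k ≤ 0 := by
    apply div_nonpos_of_nonpos_of_nonneg _ hk0.le
    exact mul_nonpos_of_nonneg_of_nonpos hA2p.le (by linarith)
  have hP3nn : 0 ≤ A2 * (1 - D2) * (2 / (k * (k + 2))) := by positivity
  have hP1δ : (A1 - A2) * (1 - D1) / k ≤ 8 * δ := by
    rw [div_le_iff₀ hk0]
    calc (A1 - A2) * (1 - D1) ≤ (8 * (α * k) * A1) * (δ * k ^ 2) :=
          mul_le_mul hAA hF1 hF1nn (by positivity)
      _ = 8 * δ * k * (α * k ^ 2 * A1) := by ring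
      _ ≤ 8 * δ * k * 1 := mul_le_mul_of_nonneg_left hU1 (by positivity)
      _ = 8 * δ * k := by ring
  have hP1k : (A1 - A2) * (1 - D1) / k ≤ 8 / k ^ 2 := by
    rw [div_le_div_iff₀ hk0 (by positivity)]
    calc (A1 - A2) * (1 - D1) * k ^ 2 ≤ ((8 * (α * k) * A1) * 1) * k ^ 2 := by
          apply mul_le_mul_of_nonneg_right _ (by positivity)
          exact mul_le_mul hAA (by linarith) hF1nn (by positivity)
      _ = 8 * k * (α * k ^ 2 * A1) := by ring
      _ ≤ 8 * k * 1 := mul_le_mul_of_nonneg_left hU1 (by positivity)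
      _ = 8 * k := by ring
  have habs2 : |A2 * (D2 - D1) / k| = A2 * (D1 - D2) / k := by
    rw [abs_of_nonpos hP2np]; ring
  have hQ2 : A2 * (D1 - D2) ≤ 1 * (8 * (δ * k) * D1) :=
    mul_le_mul hA2le hDD (by linarith) (by norm_num)
  have hP2δ : A2 * (D1 - D2) / k ≤ 8 * δ := by
    rw [div_le_iff₀ hk0]
    calc A2 * (D1 - D2) ≤ 1 * (8 * (δ * k) * D1) := hQ2
      _ = 8 * δ * k * D1 := by ring
      _ ≤ 8 * δ * k * 1 := mul_le_mul_of_nonneg_left hD1le (by positivity)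
      _ = 8 * δ * k := by ring
  have hP2k : A2 * (D1 - D2) / k ≤ 8 / k ^ 2 := by
    rw [div_le_div_iff₀ hk0 (by positivity)]
    calc A2 * (D1 - D2) * k ^ 2 ≤ (1 * (8 * (δ * k) * D1)) * k ^ 2 :=
          mul_le_mul_of_nonneg_right hQ2 (by positivity)
      _ = 8 * k * (δ * k ^ 2 * D1) := by ring
      _ ≤ 8 * k * 1 := mul_le_mul_of_nonneg_left hU2 (by positivity)
      _ = 8 * k := by ring
  have hE2' : A2 * (1 - D2) ≤ δ * (k + 2) ^ 2 := by
    calc A2 * (1 - D2) ≤ 1 * (δ * (k + 2) ^ 2) :=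
          mul_le_mul hA2le hE2 hF2nn (by norm_num)
      _ = δ * (k + 2) ^ 2 := by ring
  have hE2le1 : A2 * (1 - D2) ≤ 1 := by
    calc A2 * (1 - D2) ≤ 1 * 1 := mul_le_mul hA2le (by linarith) hF2nn (by norm_num)
      _ = 1 := by norm_num
  have hP3δ : A2 * (1 - D2) * (2 / (k * (k + 2))) ≤ 6 * δ := by
    calc A2 * (1 - D2) * (2 / (k * (k + 2))) ≤ (δ * (k + 2) ^ 2) * (2 / (k * (k + 2))) :=
          mul_le_mul_of_nonneg_right hE2' (by positivity)
      _ = 2 * δ * (k + 2) / k := by field_simp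
      _ ≤ 6 * δ := by
          rw [div_le_iff₀ hk0]
          nlinarith
  have hP3k : A2 * (1 - D2) * (2 / (k * (k + 2))) ≤ 2 / k ^ 2 := by
    calc A2 * (1 - D2) * (2 / (k * (k + 2))) ≤ 1 * (2 / (k * (k + 2))) :=
          mul_le_mul_of_nonneg_right hE2le1 (by positivity)
      _ = 2 / (k * (k + 2)) := by ring
      _ ≤ 2 / k ^ 2 := by
          apply div_le_div_of_nonneg_left (by norm_num) (by positivity)
          nlinarith
  have htri : |(A1 - A2) * (1 - D1) / k + A2 * (D2 - D1) / k
      + A2 * (1 - D2) * (2 / (k * (k + 2)))|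
      ≤ |(A1 - A2) * (1 - D1) / k| + |A2 * (D2 - D1) / k|
        + |A2 * (1 - D2) * (2 / (k * (k + 2)))| := abs_add_three _ _ _
  rw [abs_of_nonneg hP1nn, habs2, abs_of_nonneg hP3nn] at htri
  rcases le_total δ (1 / k ^ 2) with h | h
  · rw [min_eq_left h]
    linarith
  · rw [min_eq_right h]
    have h34 : 34 * (1 / k ^ 2) = 34 / k ^ 2 := by ring
    rw [h34]
    have h8 : (8:ℝ) / k ^ 2 + 8 / k ^ 2 + 2 / k ^ 2 ≤ 34 / k ^ 2 := by
      rw [← add_div, ← add_div]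
      gcongr
      norm_num
    linarith

/-- Uniform interior time-increment bound for the heat semigroup applied to `𝟙`:
for `ϑ > 0` and `b ∈ (0,1/2)` there is `C > 0` such that for all `t > 0`, `Δ > 0`
and `x ∈ [b, 1−b]`,
`|∑_{ℓ≥0} e^{−ϑπ²(2ℓ+1)²t} (1 − e^{−ϑπ²(2ℓ+1)²Δ}) sin(π(2ℓ+1)x)/(2ℓ+1)| ≤ C √Δ`. -/
theorem heat_semigroup_one_time_increment_bound (ϑ b : ℝ) (hϑ : 0 < ϑ)
    (hb : b ∈ Set.Ioo (0 : ℝ) (1 / 2)) :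
    ∃ C > (0 : ℝ), ∀ t > (0 : ℝ), ∀ Δ > (0 : ℝ), ∀ x ∈ Set.Icc b (1 - b),
      |∑' ℓ : ℕ, Real.exp (-(ϑ * π ^ 2 * (2 * (ℓ : ℝ) + 1) ^ 2 * t))
          * (1 - Real.exp (-(ϑ * π ^ 2 * (2 * (ℓ : ℝ) + 1) ^ 2 * Δ)))
          * Real.sin (π * (2 * (ℓ : ℝ) + 1) * x) / (2 * (ℓ : ℝ) + 1)|
        ≤ C * Real.sqrt Δ := by
  obtain ⟨hb0, hb2⟩ := hb
  have hπ := Real.pi_pos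
  have hc : 0 < ϑ * π ^ 2 := by positivity
  have hs : 0 < Real.sin (π * b) := by
    apply Real.sin_pos_of_pos_of_lt_pi (by positivity)
    nlinarith
  refine ⟨68 * Real.sqrt (ϑ * π ^ 2) / Real.sin (π * b), ?_, ?_⟩
  · have := Real.sqrt_pos.mpr hc
    positivity
  intro t ht Δ hΔ x hx
  obtain ⟨hx1, hx2⟩ := hx
  set c := ϑ * π ^ 2 with hcdef
  set f : ℕ → ℝ := fun ℓ =>
    Real.exp (-(c * (2 * (ℓ:ℝ) + 1) ^ 2 * t))
      * (1 - Real.exp (-(c * (2 * (ℓ:ℝ) + 1) ^ 2 * Δ))) / (2 * (ℓ:ℝ) + 1) with hfdef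
  set g : ℕ → ℝ := fun ℓ => Real.sin (π * (2 * (ℓ:ℝ) + 1) * x) with hgdef
  have hk1 : ∀ ℓ : ℕ, (1:ℝ) ≤ 2 * (ℓ:ℝ) + 1 := by
    intro ℓ; have := Nat.cast_nonneg (α := ℝ) ℓ; linarith
  have hk0 : ∀ ℓ : ℕ, (0:ℝ) < 2 * (ℓ:ℝ) + 1 := fun ℓ => lt_of_lt_of_le one_pos (hk1 ℓ)
  -- rewrite summand
  have hterm : ∀ ℓ : ℕ,
      Real.exp (-(ϑ * π ^ 2 * (2 * (ℓ : ℝ) + 1) ^ 2 * t))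
        * (1 - Real.exp (-(ϑ * π ^ 2 * (2 * (ℓ : ℝ) + 1) ^ 2 * Δ)))
        * Real.sin (π * (2 * (ℓ : ℝ) + 1) * x) / (2 * (ℓ : ℝ) + 1) = f ℓ * g ℓ := by
    intro ℓ
    simp only [hfdef, hgdef, ← hcdef]
    ring
  rw [tsum_congr hterm]
  -- basic bounds on f
  have hf_nonneg : ∀ ℓ, 0 ≤ f ℓ := by
    intro ℓ
    apply div_nonneg _ (hk0 ℓ).le
    apply mul_nonneg (Real.exp_pos _).le
    have : Real.exp (-(c * (2 * (ℓ:ℝ) + 1) ^ 2 * Δ)) ≤ 1 :=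
      Real.exp_le_one_iff.mpr (neg_nonpos.mpr (by positivity))
    linarith
  set r := Real.exp (-(c * t)) with hrdef
  have hr0 : 0 ≤ r := (Real.exp_pos _).le
  have hr1 : r < 1 := Real.exp_lt_one_iff.mpr (neg_lt_zero.mpr (by positivity))
  have hf_le : ∀ ℓ, f ℓ ≤ r ^ ℓ := by
    intro ℓ
    have h1 : f ℓ ≤ Real.exp (-(c * (2 * (ℓ:ℝ) + 1) ^ 2 * t)) := by
      apply le_trans (div_le_self _ (hk1 ℓ))
      · have hE := Real.exp_pos (-(c * (2 * (ℓ:ℝ) + 1) ^ 2 * t))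
        have h1 : Real.exp (-(c * (2 * (ℓ:ℝ) + 1) ^ 2 * Δ)) ≤ 1 :=
          Real.exp_le_one_iff.mpr (neg_nonpos.mpr (by positivity))
        nlinarith [Real.exp_pos (-(c * (2 * (ℓ:ℝ) + 1) ^ 2 * Δ))]
      · apply mul_nonneg (Real.exp_pos _).le
        have h1 : Real.exp (-(c * (2 * (ℓ:ℝ) + 1) ^ 2 * Δ)) ≤ 1 :=
          Real.exp_le_one_iff.mpr (neg_nonpos.mpr (by positivity))
        linarith
    have h2 : Real.exp (-(c * (2 * (ℓ:ℝ) + 1) ^ 2 * t)) ≤ r ^ ℓ := by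
      rw [hrdef, ← Real.exp_nat_mul]
      apply Real.exp_le_exp.mpr
      have hℓ : (0:ℝ) ≤ (ℓ:ℝ) := Nat.cast_nonneg ℓ
      have h3 : (ℓ:ℝ) ≤ (2 * (ℓ:ℝ) + 1) ^ 2 := by nlinarith
      nlinarith [mul_le_mul_of_nonneg_left h3 (by positivity : (0:ℝ) ≤ c * t)]
    linarith
  have hf0 : Tendsto f atTop (nhds 0) :=
    squeeze_zero hf_nonneg hf_le (tendsto_pow_atTop_nhds_zero_of_lt_one hr0 hr1)
  have hsum : Summable (fun ℓ => f ℓ * g ℓ) := by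
    apply Summable.of_norm_bounded (summable_geometric_of_lt_one hr0 hr1)
    intro ℓ
    rw [Real.norm_eq_abs, abs_mul]
    calc |f ℓ| * |g ℓ| ≤ |f ℓ| * 1 := by
          apply mul_le_mul_of_nonneg_left _ (abs_nonneg _)
          exact Real.abs_sin_le_one (π * (2 * (ℓ:ℝ) + 1) * x)
      _ = f ℓ := by rw [mul_one, abs_of_nonneg (hf_nonneg ℓ)]
      _ ≤ r ^ ℓ := hf_le ℓ
  -- bound on sine partial sums
  have hsx : Real.sin (π * b) ≤ Real.sin (π * x) := aux_sin_lower hb0 hb2 hx1 hx2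
  have hsxp : 0 < Real.sin (π * x) := lt_of_lt_of_le hs hsx
  have hD : ∀ n, |∑ ℓ ∈ Finset.range n, g ℓ| ≤ 1 / Real.sin (π * b) := by
    intro n
    have hgeq : ∀ ℓ : ℕ, g ℓ = Real.sin ((2 * (ℓ:ℝ) + 1) * (π * x)) := by
      intro ℓ; simp only [hgdef]; congr 1; ring
    have heq : (∑ ℓ ∈ Finset.range n, g ℓ) * Real.sin (π * x)
        = Real.sin ((n:ℝ) * (π * x)) ^ 2 := by
      calc (∑ ℓ ∈ Finset.range n, g ℓ) * Real.sin (π * x)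
          = (∑ ℓ ∈ Finset.range n, Real.sin ((2 * (ℓ:ℝ) + 1) * (π * x))) * Real.sin (π * x) := by
            rw [Finset.sum_congr rfl (fun ℓ _ => hgeq ℓ)]
      _ = Real.sin ((n:ℝ) * (π * x)) ^ 2 := aux_sin_partial_sum (π * x) n
    have hSn : (∑ ℓ ∈ Finset.range n, g ℓ) = Real.sin ((n:ℝ) * (π * x)) ^ 2 / Real.sin (π * x) := by
      rw [eq_div_iff hsxp.ne']
      exact heq
    rw [hSn, abs_of_nonneg (by positivity)]
    exact div_le_div₀ zero_le_one (Real.sin_sq_le_one _) hs hsx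
  -- variation bound
  set T : ℝ := ∑' ℓ : ℕ, 34 * min (c * Δ) (1 / (2 * (ℓ:ℝ) + 1) ^ 2) with hTdef
  have hcΔ : 0 < c * Δ := mul_pos hc hΔ
  have hTsummable : Summable (fun ℓ : ℕ => 34 * min (c * Δ) (1 / (2 * (ℓ:ℝ) + 1) ^ 2)) :=
    (aux_summable_min_odd hcΔ).mul_left 34
  have hvar : ∀ ℓ : ℕ, |f ℓ - f (ℓ + 1)| ≤ 34 * min (c * Δ) (1 / (2 * (ℓ:ℝ) + 1) ^ 2) := by
    intro ℓ
    have h1 : f ℓ = Real.exp (-((c * t) * (2 * (ℓ:ℝ) + 1) ^ 2))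
        * (1 - Real.exp (-((c * Δ) * (2 * (ℓ:ℝ) + 1) ^ 2))) / (2 * (ℓ:ℝ) + 1) := by
      simp only [hfdef]
      rw [show -(c * (2 * (ℓ:ℝ) + 1) ^ 2 * t) = -((c * t) * (2 * (ℓ:ℝ) + 1) ^ 2) by ring,
        show -(c * (2 * (ℓ:ℝ) + 1) ^ 2 * Δ) = -((c * Δ) * (2 * (ℓ:ℝ) + 1) ^ 2) by ring]
    have h2 : f (ℓ + 1) = Real.exp (-((c * t) * ((2 * (ℓ:ℝ) + 1) + 2) ^ 2))
        * (1 - Real.exp (-((c * Δ) * ((2 * (ℓ:ℝ) + 1) + 2) ^ 2))) / ((2 * (ℓ:ℝ) + 1) + 2) := by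
      simp only [hfdef]
      have hcast : (2 * (((ℓ:ℕ) + 1 : ℕ):ℝ) + 1) = (2 * (ℓ:ℝ) + 1) + 2 := by push_cast; ring
      rw [hcast,
        show -(c * ((2 * (ℓ:ℝ) + 1) + 2) ^ 2 * t) = -((c * t) * ((2 * (ℓ:ℝ) + 1) + 2) ^ 2) by ring,
        show -(c * ((2 * (ℓ:ℝ) + 1) + 2) ^ 2 * Δ) = -((c * Δ) * ((2 * (ℓ:ℝ) + 1) + 2) ^ 2) by ring]
    rw [h1, h2]
    exact aux_var_bound (mul_pos hc ht) hcΔ (hk1 ℓ)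
  have hT : ∀ n, ∑ ℓ ∈ Finset.range n, |f ℓ - f (ℓ + 1)| ≤ T := by
    intro n
    calc ∑ ℓ ∈ Finset.range n, |f ℓ - f (ℓ + 1)|
        ≤ ∑ ℓ ∈ Finset.range n, 34 * min (c * Δ) (1 / (2 * (ℓ:ℝ) + 1) ^ 2) :=
          Finset.sum_le_sum (fun ℓ _ => hvar ℓ)
      _ ≤ T := by
          apply Summable.sum_le_tsum _ _ hTsummable
          intro ℓ _
          have : 0 ≤ min (c * Δ) (1 / (2 * (ℓ:ℝ) + 1) ^ 2) :=
            le_min hcΔ.le (by positivity)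
          linarith
  have habel := aux_abel_tsum_le hD hf0 hT hsum
  have hTle : T ≤ 34 * (2 * Real.sqrt (c * Δ)) := by
    rw [hTdef, tsum_mul_left]
    exact mul_le_mul_of_nonneg_left (aux_tsum_min_le hcΔ) (by norm_num)
  calc |∑' ℓ, f ℓ * g ℓ| ≤ (1 / Real.sin (π * b)) * T := habel
    _ ≤ (1 / Real.sin (π * b)) * (34 * (2 * Real.sqrt (c * Δ))) := by
        apply mul_le_mul_of_nonneg_left hTle (by positivity)
    _ = 68 * Real.sqrt (ϑ * π ^ 2) / Real.sin (π * b) * Real.sqrt Δ := by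
        rw [Real.sqrt_mul hc.le, ← hcdef]
        field_simp
        ring
end

section
/- Let X be a continuous centered Gaussian field on [0,∞)×[0,1] as in the context, with increment variance bound Var(X(t,x) − X(s,y)) ≤ L(√|t−s| + |x−y|) and X(t,0) = X(t,1) = 0 a.s. Then for every p ∈ [1,∞) there is a constant C > 0, depending only on p and L, such that sup_{t ≥ 0} E[(sup_{x ∈ [0,1]} |X(t,x)|)^p] ≤ C. -/
open Real MeasureTheory ProbabilityTheory

open scoped NNReal ENNReal

open Filter

section AuxLemmas

lemma aux_integrable_abs_rpow_mul_exp {b : ℝ} (hb : 0 < b) {s : ℝ} (hs : 0 ≤ s) :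
    Integrable fun x : ℝ => |x| ^ s * Real.exp (-b * x ^ 2) := by
  have base : Integrable fun x : ℝ => x ^ s * Real.exp (-b * x ^ 2) :=
    integrable_rpow_mul_exp_neg_mul_sq hb (by linarith)
  have hIoi : IntegrableOn (fun x : ℝ => |x| ^ s * Real.exp (-b * x ^ 2)) (Set.Ioi 0) :=
    base.integrableOn.congr_fun (fun x hx => by rw [abs_of_pos hx]) measurableSet_Ioi
  rw [← integrableOn_univ, ← @Set.Iio_union_Ici _ _ (0 : ℝ), integrableOn_union,
    integrableOn_Ici_iff_integrableOn_Ioi]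
  refine ⟨?_, hIoi⟩
  rw [← (Measure.measurePreserving_neg (volume : Measure ℝ)).integrableOn_comp_preimage
      (Homeomorph.neg ℝ).measurableEmbedding]
  simp only [Function.comp_def, neg_sq, abs_neg, Set.neg_preimage, Set.neg_Iio, neg_zero]
  exact hIoi

lemma aux_meas_ofReal_abs_rpow {q : ℝ} (hq : 0 ≤ q) :
    Measurable fun u : ℝ => ENNReal.ofReal (|u| ^ q) :=
  (((Real.continuous_rpow_const hq).comp continuous_abs).measurable).ennreal_ofReal

lemma aux_gaussian_moment_lt_top {q : ℝ} (hq : 0 ≤ q) :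
    ∫⁻ u, ENNReal.ofReal (|u| ^ q) ∂(gaussianReal 0 1) < ⊤ := by
  rw [gaussianReal_of_var_ne_zero 0 one_ne_zero,
    lintegral_withDensity_eq_lintegral_mul _ (measurable_gaussianPDF 0 1)
      (aux_meas_ofReal_abs_rpow hq)]
  have heq : ∀ u : ℝ, (gaussianPDF 0 1 * fun u => ENNReal.ofReal (|u| ^ q)) u
      = ENNReal.ofReal ((Real.sqrt (2 * π))⁻¹ * (|u| ^ q * Real.exp (-(1/2 : ℝ) * u ^ 2))) := by
    intro u
    simp only [Pi.mul_apply, gaussianPDF, gaussianPDFReal]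
    rw [← ENNReal.ofReal_mul (by positivity)]
    congr 1
    push_cast
    ring_nf
  calc ∫⁻ u, (gaussianPDF 0 1 * fun u => ENNReal.ofReal (|u| ^ q)) u
      = ∫⁻ u, ENNReal.ofReal ((Real.sqrt (2 * π))⁻¹ *
          (|u| ^ q * Real.exp (-(1/2 : ℝ) * u ^ 2))) := by simp_rw [heq]
    _ < ⊤ := ((aux_integrable_abs_rpow_mul_exp (by norm_num : (0:ℝ) < 1/2) hq).const_mul
        _).lintegral_lt_top

lemma aux_gaussian_moment_scale{q : ℝ} (hq : 0 < q) (v : ℝ≥0) :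
    ∫⁻ u, ENNReal.ofReal (|u| ^ q) ∂(gaussianReal 0 v)
      ≤ ENNReal.ofReal ((v : ℝ) ^ (q / 2)) * ∫⁻ u, ENNReal.ofReal (|u| ^ q) ∂(gaussianReal 0 1) := by
  by_cases hv : v = 0
  · simp [hv, gaussianReal_zero_var, lintegral_dirac' _ (aux_meas_ofReal_abs_rpow hq.le),
      Real.zero_rpow hq.ne']
  · have hmap : (gaussianReal 0 1).map (fun y => Real.sqrt v * y) = gaussianReal 0 v := by
      rw [gaussianReal_map_const_mul (Real.sqrt v)]
      congr 1
      · simp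
      · ext
        simp [Real.sq_sqrt v.2]
    rw [← hmap, lintegral_map (aux_meas_ofReal_abs_rpow hq.le) (measurable_const_mul _)]
    have hptw : ∀ y : ℝ, ENNReal.ofReal (|Real.sqrt v * y| ^ q)
        = ENNReal.ofReal ((v : ℝ) ^ (q / 2)) * ENNReal.ofReal (|y| ^ q) := by
      intro y
      rw [abs_mul, abs_of_nonneg (Real.sqrt_nonneg _),
        Real.mul_rpow (Real.sqrt_nonneg _) (abs_nonneg _), ← ENNReal.ofReal_mul (by positivity)]
      congr 2
      rw [Real.sqrt_eq_rpow, ← Real.rpow_mul (NNReal.coe_nonneg v)]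
      ring_nf
    simp_rw [hptw]
    rw [lintegral_const_mul _ (aux_meas_ofReal_abs_rpow hq.le)]

lemma aux_rpow_le_rpow_add_one{f : ℝ≥0∞} {p q : ℝ} (hp : 0 < p) (hpq : p ≤ q) :
    f ^ p ≤ f ^ q + 1 := by
  rcases le_total f 1 with h | h
  · calc f ^ p ≤ 1 ^ p := ENNReal.rpow_le_rpow h hp.le
    _ = 1 := ENNReal.one_rpow p
    _ ≤ f ^ q + 1 := le_add_self
  · exact le_trans (ENNReal.rpow_le_rpow_of_exponent_le h hpq) (le_add_right le_rfl)

lemma aux_finset_sup_rpow_le_sum {ι : Type*} (s : Finset ι) (f : ι → ℝ≥0∞) {q : ℝ} (hq : 0 < q) :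
    s.sup f ^ q ≤ ∑ j ∈ s, f j ^ q := by
  rcases s.eq_empty_or_nonempty with rfl | hne
  · simp [ENNReal.zero_rpow_of_pos hq]
  · obtain ⟨j, hj, hsup⟩ := Finset.exists_mem_eq_sup s hne f
    rw [hsup]
    exact Finset.single_le_sum (f := fun i => f i ^ q) (fun i _ => zero_le) hj

lemma aux_iSup_rpow_le {u : ℕ → ℝ≥0∞} (hu : Monotone u) {q : ℝ} (hq : 0 < q) :
    (⨆ n, u n) ^ q ≤ ⨆ n, u n ^ q := by
  have h1 : Tendsto u atTop (nhds (⨆ n, u n)) := tendsto_atTop_iSup hu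
  have h3 : Tendsto (fun n => u n ^ q) atTop (nhds ((⨆ n, u n) ^ q)) :=
    (ENNReal.continuous_rpow_const.tendsto _).comp h1
  exact le_of_tendsto' h3 fun n => le_iSup (fun n => u n ^ q) n

lemma aux_minkowski_sum {Ω : Type*} [MeasurableSpace Ω] (P : Measure Ω)
    {q : ℝ} (hq : 1 ≤ q) (g : ℕ → Ω → ℝ≥0∞) (hg : ∀ m, AEMeasurable (g m) P) (N : ℕ) :
    (∫⁻ ω, (∑ m ∈ Finset.range N, g m ω) ^ q ∂P) ^ (1/q)
      ≤ ∑ m ∈ Finset.range N, (∫⁻ ω, g m ω ^ q ∂P) ^ (1/q) := by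
  have hq0 : 0 < q := lt_of_lt_of_le zero_lt_one hq
  induction N with
  | zero =>
    simp only [Finset.range_zero, Finset.sum_empty, lintegral_const, zero_mul,
      ENNReal.zero_rpow_of_pos hq0]
    simp [ENNReal.zero_rpow_of_pos (show (0:ℝ) < 1/q by positivity)]
    exact hq0
  | succ N ih =>
    rw [Finset.sum_range_succ]
    have h := ENNReal.lintegral_Lp_add_le (μ := P)
      (f := fun ω => ∑ m ∈ Finset.range N, g m ω) (g := g N)
      (Finset.aemeasurable_fun_sum _ fun m _ => hg m) (hg N) hq
    have heq : ∀ ω, (∑ m ∈ Finset.range (N+1), g m ω)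
        = ((fun ω => ∑ m ∈ Finset.range N, g m ω) + g N) ω := by
      intro ω; simp [Finset.sum_range_succ]
    simp_rw [heq]
    exact le_trans h (add_le_add ih le_rfl)

lemma aux_floor_div_pow_tendsto {x : ℝ} (hx0 : 0 ≤ x) :
    Tendsto (fun N : ℕ => (⌊x * 2 ^ N⌋₊ : ℝ) / 2 ^ N) atTop (nhds x) := by
  have key : ∀ N : ℕ, |(⌊x * 2 ^ N⌋₊ : ℝ) / 2 ^ N - x| ≤ (1/2 : ℝ) ^ N := by
    intro N
    have h2 : (0:ℝ) < 2 ^ N := by positivity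
    have hle : (⌊x * 2 ^ N⌋₊ : ℝ) ≤ x * 2 ^ N := Nat.floor_le (by positivity)
    have hlt : x * 2 ^ N < (⌊x * 2 ^ N⌋₊ : ℝ) + 1 := Nat.lt_floor_add_one _
    rw [abs_le]
    constructor
    · rw [neg_le, neg_sub, sub_le_iff_le_add, div_pow, one_pow, ← add_div,
        le_div_iff₀ h2]
      linarith
    · rw [div_pow, one_pow, sub_le_iff_le_add, div_le_iff₀ h2, add_mul,
        div_mul_cancel₀ _ h2.ne']
      linarith
  have h0 : Tendsto (fun N : ℕ => (1/2 : ℝ) ^ N) atTop (nhds 0) := by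
    apply tendsto_pow_atTop_nhds_zero_of_lt_one <;> norm_num
  have habs := squeeze_zero (fun N => abs_nonneg _) key h0
  have hsub : Tendsto (fun N : ℕ => (⌊x * 2 ^ N⌋₊ : ℝ) / 2 ^ N - x) atTop (nhds 0) :=
    (tendsto_zero_iff_abs_tendsto_zero _).2 habs
  have h2 := hsub.add_const x
  rw [zero_add] at h2
  refine h2.congr fun N => by ring

lemma aux_real_coeff{L q : ℝ} (hL : 0 ≤ L) (hq : 0 < q) (m : ℕ) :
    ((2:ℝ)^m)^(1/q) * ((L * ((2:ℝ)^m)⁻¹)^(q/2))^(1/q)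
      = Real.sqrt L * ((2:ℝ) ^ (1/q - 1/2 : ℝ)) ^ m := by
  have h2 : (0:ℝ) < 2 ^ m := by positivity
  have e1 : ((L * ((2:ℝ)^m)⁻¹)^(q/2))^(1/q) = Real.sqrt L * ((2:ℝ)^m)^(-(1/2) : ℝ) := by
    rw [← Real.rpow_mul (by positivity), show q/2 * (1/q) = 1/2 by field_simp,
      Real.mul_rpow hL (by positivity), Real.inv_rpow h2.le, Real.sqrt_eq_rpow,
      ← Real.rpow_neg h2.le]
  rw [e1, mul_left_comm]
  congr 1
  rw [← Real.rpow_add h2, ← Real.rpow_natCast (2:ℝ) m, ← Real.rpow_mul two_pos.le,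
    ← Real.rpow_natCast ((2:ℝ) ^ (1/q - 1/2 : ℝ)) m, ← Real.rpow_mul two_pos.le]
  congr 1
  ring

end AuxLemmas

/-- Uniform moment bound for the sup of a continuous centered Gaussian field on
`[0,∞)×[0,1]` with Dirichlet boundary and increment variance bound
`Var(X(t,x) − X(s,y)) ≤ L(√|t−s| + |x−y|)`: for every `p ∈ [1,∞)` there is `C > 0` with
`sup_{t≥0} E[(sup_{x∈[0,1]} |X(t,x)|)^p] ≤ C`. -/
theorem gaussian_field_sup_moment_bound {Ω : Type*} [MeasurableSpace Ω]
    (P : Measure Ω) [IsProbabilityMeasure P]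
    (X : ℝ → ℝ → Ω → ℝ) (L : ℝ) (hL : 0 < L)
    (hcont : ∀ᵐ ω ∂P,
      ContinuousOn (fun q : ℝ × ℝ => X q.1 q.2 ω) (Set.Ici 0 ×ˢ Set.Icc 0 1))
    (hbdry : ∀ t : ℝ, 0 ≤ t → ∀ᵐ ω ∂P, X t 0 ω = 0 ∧ X t 1 ω = 0)
    (hgauss : ∀ s t : ℝ, 0 ≤ s → 0 ≤ t → ∀ x ∈ Set.Icc (0 : ℝ) 1, ∀ y ∈ Set.Icc (0 : ℝ) 1,
      ∃ v : NNReal, (v : ℝ) ≤ L * (Real.sqrt |t - s| + |x - y|) ∧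
        Measure.map (fun ω => X t x ω - X s y ω) P = gaussianReal 0 v)
    (p : ℝ) (hp : 1 ≤ p) :
    ∃ C > (0 : ℝ), ∀ t : ℝ, 0 ≤ t →
      (∫⁻ ω, (⨆ x : Set.Icc (0 : ℝ) 1, ENNReal.ofReal |X t x.1 ω|) ^ p ∂P)
        ≤ ENNReal.ofReal C := by
  classical
  set q : ℝ := max p 3 with hqdef
  have hq3 : (3:ℝ) ≤ q := le_max_right _ _
  have hq1 : (1:ℝ) ≤ q := by linarith
  have hq0 : (0:ℝ) < q := by linarith
  have hpq : p ≤ q := le_max_left _ _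
  have hp0 : (0:ℝ) < p := by linarith
  set r : ℝ := (2:ℝ) ^ (1/q - 1/2 : ℝ) with hrdef
  have hr0 : 0 < r := Real.rpow_pos_of_pos two_pos _
  have hr1 : r < 1 := by
    apply Real.rpow_lt_one_of_one_lt_of_neg one_lt_two
    have : 1/q ≤ 1/3 := by
      apply div_le_div_of_nonneg_left (by norm_num) (by norm_num) hq3
    linarith
  set Iq : ℝ≥0∞ := ∫⁻ u, ENNReal.ofReal (|u| ^ q) ∂(gaussianReal 0 1) with hIqdef
  have hIqtop : Iq < ⊤ := aux_gaussian_moment_lt_top hq0.le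
  set K : ℝ := Real.sqrt L * (1 - r)⁻¹ with hKdef
  have hK0 : 0 ≤ K := by
    apply mul_nonneg (Real.sqrt_nonneg _)
    rw [inv_nonneg]; linarith
  set D : ℝ≥0∞ := ENNReal.ofReal (K ^ q) * Iq + 1 with hDdef
  have hDtop : D ≠ ⊤ := by
    rw [hDdef]
    exact ENNReal.add_ne_top.2 ⟨ENNReal.mul_ne_top ENNReal.ofReal_ne_top hIqtop.ne,
      ENNReal.one_ne_top⟩
  refine ⟨D.toReal + 1, by positivity, ?_⟩
  intro t ht
  -- basic membership
  have h01 : ∀ (k n : ℕ), k ≤ 2^n → ((k:ℝ)/2^n) ∈ Set.Icc (0:ℝ) 1 := by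
    intro k n hk
    constructor
    · positivity
    · rw [div_le_one (by positivity)]
      exact_mod_cast hk
  have h0mem : (0:ℝ) ∈ Set.Icc (0:ℝ) 1 := by norm_num
  -- increments: measurability and moment bound
  have hInc : ∀ x ∈ Set.Icc (0:ℝ) 1, ∀ y ∈ Set.Icc (0:ℝ) 1,
      AEMeasurable (fun ω => X t y ω - X t x ω) P ∧
      ∫⁻ ω, ENNReal.ofReal |X t y ω - X t x ω| ^ q ∂P
        ≤ ENNReal.ofReal ((L * |y - x|) ^ (q/2)) * Iq := by
    intro x hx y hy
    obtain ⟨v, hv, hmap⟩ := hgauss t t ht ht y hy x hx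
    have hvle : (v:ℝ) ≤ L * |y - x| := by
      simpa [sub_self, Real.sqrt_zero] using hv
    have hmeas : AEMeasurable (fun ω => X t y ω - X t x ω) P :=
      aemeasurable_of_map_neZero (by rw [hmap]; infer_instance)
    refine ⟨hmeas, ?_⟩
    have hrw : ∀ ω : Ω, ENNReal.ofReal |X t y ω - X t x ω| ^ q
        = ENNReal.ofReal (|X t y ω - X t x ω| ^ q) := fun ω =>
      ENNReal.ofReal_rpow_of_nonneg (abs_nonneg _) hq0.le
    simp_rw [hrw]
    calc ∫⁻ ω, ENNReal.ofReal (|X t y ω - X t x ω| ^ q) ∂P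
        = ∫⁻ u, ENNReal.ofReal (|u| ^ q)
            ∂(Measure.map (fun ω => X t y ω - X t x ω) P) :=
          (lintegral_map' (aux_meas_ofReal_abs_rpow hq0.le).aemeasurable hmeas).symm
      _ = ∫⁻ u, ENNReal.ofReal (|u| ^ q) ∂(gaussianReal 0 v) := by rw [hmap]
      _ ≤ ENNReal.ofReal ((v:ℝ) ^ (q/2)) * Iq := aux_gaussian_moment_scale hq0 v
      _ ≤ ENNReal.ofReal ((L * |y - x|) ^ (q/2)) * Iq :=
          mul_le_mul_left (ENNReal.ofReal_le_ofReal
            (Real.rpow_le_rpow v.coe_nonneg hvle (by positivity))) _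
  -- pointwise field
  set G : ℝ → Ω → ℝ≥0∞ := fun x ω => ENNReal.ofReal |X t x ω| with hGdef
  have hGmeas : ∀ x ∈ Set.Icc (0:ℝ) 1, AEMeasurable (G x) P := by
    intro x hx
    have h1 := (hInc 0 h0mem x hx).1
    have h2 : AEMeasurable (fun ω => ENNReal.ofReal |X t x ω - X t 0 ω|) P :=
      (ENNReal.measurable_ofReal.comp measurable_abs).comp_aemeasurable h1
    refine h2.congr ?_
    filter_upwards [hbdry t ht] with ω hω
    simp [hGdef, hω.1]
  set S : ℕ → Ω → ℝ≥0∞ :=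
    fun N ω => (Finset.range (2^N+1)).sup fun k => G ((k:ℝ)/2^N) ω with hSdef
  set M : ℕ → Ω → ℝ≥0∞ := fun m ω => (Finset.range (2^m)).sup
      fun j => ENNReal.ofReal |X t (((j:ℝ)+1)/2^m) ω - X t ((j:ℝ)/2^m) ω| with hMdef
  -- aemeasurability of finite sups
  have hsup_meas : ∀ (n : ℕ) (f : ℕ → Ω → ℝ≥0∞), (∀ j < n, AEMeasurable (f j) P) →
      AEMeasurable (fun ω => (Finset.range n).sup fun j => f j ω) P := by
    intro n f hf
    have heq : (fun ω => (Finset.range n).sup fun j => f j ω)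
        = fun ω => ⨆ j ∈ (↑(Finset.range n) : Set ℕ), f j ω := by
      funext ω
      rw [Finset.sup_eq_iSup]
      simp
    rw [heq]
    exact AEMeasurable.biSup _ (Set.to_countable _) fun i hi => hf i (by simpa using hi)
  have hSmeas : ∀ N, AEMeasurable (S N) P := fun N =>
    hsup_meas _ _ fun k hk => hGmeas _ (h01 k N (Nat.lt_succ_iff.mp hk))
  have hMmeas : ∀ m, AEMeasurable (M m) P := by
    intro m
    refine hsup_meas _ _ fun j hj => ?_
    have hj1 : ((j:ℝ)+1)/2^m ∈ Set.Icc (0:ℝ) 1 := by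
      have : (((j+1 : ℕ)):ℝ)/2^m ∈ Set.Icc (0:ℝ) 1 := h01 (j+1) m hj
      simpa using this
    have hj0 : ((j:ℝ))/2^m ∈ Set.Icc (0:ℝ) 1 := h01 j m (le_of_lt hj)
    exact (ENNReal.measurable_ofReal.comp measurable_abs).comp_aemeasurable
      ((hInc _ hj0 _ hj1).1)
  -- monotonicity of S
  have hSmono : ∀ ω, Monotone fun N => S N ω := by
    intro ω
    apply monotone_nat_of_le_succ
    intro N
    simp only [hSdef]
    refine Finset.sup_le fun k hk => ?_
    have hk' : 2*k ∈ Finset.range (2^(N+1)+1) := by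
      rw [Finset.mem_range] at hk ⊢
      have : k ≤ 2^N := Nat.lt_succ_iff.mp hk
      calc 2*k ≤ 2*2^N := by omega
        _ < 2^(N+1)+1 := by rw [pow_succ]; omega
    have harg : (((2*k : ℕ)):ℝ)/2^(N+1) = (k:ℝ)/2^N := by
      push_cast
      rw [pow_succ]
      field_simp
    calc G ((k:ℝ)/2^N) ω = G ((((2*k:ℕ)):ℝ)/2^(N+1)) ω := by rw [harg]
      _ ≤ S (N+1) ω := Finset.le_sup (f := fun k : ℕ => G ((k:ℝ)/2^(N+1)) ω) hk'
  -- triangle inequality in ℝ≥0∞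
  have htri : ∀ a b : ℝ, ENNReal.ofReal |a| ≤ ENNReal.ofReal |b| + ENNReal.ofReal |a - b| := by
    intro a b
    calc ENNReal.ofReal |a| ≤ ENNReal.ofReal (|b| + |a - b|) := by
          apply ENNReal.ofReal_le_ofReal
          calc |a| = |b + (a - b)| := by ring_nf
            _ ≤ |b| + |a - b| := abs_add_le _ _
      _ ≤ _ := ENNReal.ofReal_add_le
  -- chaining
  have hchain : ∀ ω, X t 0 ω = 0 → X t 1 ω = 0 →
      ∀ N, S N ω ≤ ∑ m ∈ Finset.range N, M (m+1) ω := by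
    intro ω hω0 hω1 N
    simp only [hSdef, hMdef]
    induction N with
    | zero =>
      simp only [Finset.range_zero, Finset.sum_empty]
      refine Finset.sup_le fun k hk => ?_
      rw [Finset.mem_range] at hk
      interval_cases k
      · simp [hGdef, hω0]
      · norm_num [hGdef, hω1]
    | succ N ih =>
      rw [Finset.sum_range_succ]
      have hstep : S (N+1) ω ≤ S N ω + M (N+1) ω := by
        refine Finset.sup_le fun k hk => ?_
        rw [Finset.mem_range, Nat.lt_succ_iff] at hk
        rcases Nat.even_or_odd k with ⟨j, hj⟩ | ⟨j, hj⟩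
        · -- even : k = j + j
          have hjmem : j ∈ Finset.range (2^N+1) := by
            rw [Finset.mem_range, Nat.lt_succ_iff]
            subst hj
            rw [pow_succ] at hk
            omega
          have harg : ((k:ℝ))/2^(N+1) = (j:ℝ)/2^N := by
            subst hj
            push_cast
            rw [pow_succ]
            field_simp
            ring
          calc G ((k:ℝ)/2^(N+1)) ω = G ((j:ℝ)/2^N) ω := by rw [harg]
            _ ≤ S N ω := Finset.le_sup (f := fun k : ℕ => G ((k:ℝ)/2^N) ω) hjmem
            _ ≤ S N ω + M (N+1) ω := le_self_add
        · -- odd : k = 2j+1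
          have hjmem2 : 2*j ∈ Finset.range (2^(N+1)) := by
            rw [Finset.mem_range]
            omega
          have hjmem : j ∈ Finset.range (2^N+1) := by
            rw [Finset.mem_range, Nat.lt_succ_iff]
            rw [pow_succ] at hk
            omega
          have harg0 : (((2*j:ℕ)):ℝ)/2^(N+1) = (j:ℝ)/2^N := by
            push_cast
            rw [pow_succ]
            field_simp
          have hk' : (k:ℝ) = ((2*j:ℕ):ℝ) + 1 := by
            subst hj
            push_cast
            ring
          calc G ((k:ℝ)/2^(N+1)) ω
              ≤ G (((2*j:ℕ):ℝ)/2^(N+1)) ω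
                + ENNReal.ofReal |X t ((k:ℝ)/2^(N+1)) ω - X t (((2*j:ℕ):ℝ)/2^(N+1)) ω| :=
                htri _ _
            _ ≤ S N ω + M (N+1) ω := by
                refine add_le_add ?_ ?_
                · rw [harg0]
                  exact Finset.le_sup (f := fun k : ℕ => G ((k:ℝ)/2^N) ω) hjmem
                · rw [hk']
                  simp only [hMdef]
                  exact Finset.le_sup (f := fun j' : ℕ => ENNReal.ofReal
                    |X t (((j':ℝ)+1)/2^(N+1)) ω - X t ((j':ℝ)/2^(N+1)) ω|) hjmem2
      calc S (N+1) ω ≤ S N ω + M (N+1) ω := hstep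
        _ ≤ (∑ m ∈ Finset.range N, M (m+1) ω) + M (N+1) ω := add_le_add ih le_rfl
  -- moment bound for M m
  have hMq : ∀ m : ℕ, ∫⁻ ω, M m ω ^ q ∂P
      ≤ (2:ℝ≥0∞)^m * (ENNReal.ofReal ((L * ((2:ℝ)^m)⁻¹) ^ (q/2)) * Iq) := by
    intro m
    have hpt : ∀ ω, M m ω ^ q ≤ ∑ j ∈ Finset.range (2^m),
        ENNReal.ofReal |X t (((j:ℝ)+1)/2^m) ω - X t ((j:ℝ)/2^m) ω| ^ q := by
      intro ω
      simp only [hMdef]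
      exact aux_finset_sup_rpow_le_sum _ _ hq0
    have hjm : ∀ j : ℕ, j < 2^m → AEMeasurable
        (fun ω => ENNReal.ofReal |X t (((j:ℝ)+1)/2^m) ω - X t ((j:ℝ)/2^m) ω| ^ q) P ∧
        ∫⁻ ω, ENNReal.ofReal |X t (((j:ℝ)+1)/2^m) ω - X t ((j:ℝ)/2^m) ω| ^ q ∂P
          ≤ ENNReal.ofReal ((L * ((2:ℝ)^m)⁻¹) ^ (q/2)) * Iq := by
      intro j hj
      have hj1 : ((j:ℝ)+1)/2^m ∈ Set.Icc (0:ℝ) 1 := by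
        have := h01 (j+1) m hj
        simpa using this
      have hj0 : ((j:ℝ))/2^m ∈ Set.Icc (0:ℝ) 1 := h01 j m (le_of_lt hj)
      obtain ⟨hmeas, hbound⟩ := hInc _ hj0 _ hj1
      constructor
      · exact (ENNReal.continuous_rpow_const.measurable.comp
          (ENNReal.measurable_ofReal.comp measurable_abs)).comp_aemeasurable hmeas
      · refine le_trans hbound ?_
        have : |((j:ℝ)+1)/2^m - (j:ℝ)/2^m| = ((2:ℝ)^m)⁻¹ := by
          rw [div_sub_div_same, add_sub_cancel_left, abs_of_pos (by positivity), one_div]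
        rw [this]
    calc ∫⁻ ω, M m ω ^ q ∂P
        ≤ ∫⁻ ω, ∑ j ∈ Finset.range (2^m),
            ENNReal.ofReal |X t (((j:ℝ)+1)/2^m) ω - X t ((j:ℝ)/2^m) ω| ^ q ∂P :=
          lintegral_mono hpt
      _ = ∑ j ∈ Finset.range (2^m), ∫⁻ ω,
            ENNReal.ofReal |X t (((j:ℝ)+1)/2^m) ω - X t ((j:ℝ)/2^m) ω| ^ q ∂P :=
          lintegral_finset_sum' _ fun j hj => (hjm j (Finset.mem_range.mp hj)).1
      _ ≤ ∑ _j ∈ Finset.range (2^m), ENNReal.ofReal ((L * ((2:ℝ)^m)⁻¹) ^ (q/2)) * Iq :=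
          Finset.sum_le_sum fun j hj => (hjm j (Finset.mem_range.mp hj)).2
      _ = (2:ℝ≥0∞)^m * (ENNReal.ofReal ((L * ((2:ℝ)^m)⁻¹) ^ (q/2)) * Iq) := by
          rw [Finset.sum_const, Finset.card_range, nsmul_eq_mul]
          push_cast
          ring
  -- Lq-norm bound for M m
  have hA : ∀ m : ℕ, (∫⁻ ω, M m ω ^ q ∂P) ^ (1/q)
      ≤ ENNReal.ofReal (Real.sqrt L * r ^ m) * Iq ^ (1/q) := by
    intro m
    have h1 := ENNReal.rpow_le_rpow (hMq m) (by positivity : (0:ℝ) ≤ 1/q)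
    refine le_trans h1 ?_
    rw [ENNReal.mul_rpow_of_nonneg _ _ (by positivity : (0:ℝ) ≤ 1/q),
      ENNReal.mul_rpow_of_nonneg _ _ (by positivity : (0:ℝ) ≤ 1/q)]
    have h2 : ((2:ℝ≥0∞)^m) ^ (1/q : ℝ) = ENNReal.ofReal (((2:ℝ)^m) ^ (1/q : ℝ)) := by
      rw [← ENNReal.ofReal_rpow_of_nonneg (by positivity) (by positivity : (0:ℝ) ≤ 1/q)]
      congr 1
      rw [ENNReal.ofReal_pow (by norm_num)]
      norm_num
    have h3 : (ENNReal.ofReal ((L * ((2:ℝ)^m)⁻¹) ^ (q/2))) ^ (1/q : ℝ)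
        = ENNReal.ofReal (((L * ((2:ℝ)^m)⁻¹) ^ (q/2)) ^ (1/q : ℝ)) :=
      ENNReal.ofReal_rpow_of_nonneg (by positivity) (by positivity : (0:ℝ) ≤ 1/q)
    rw [h2, h3, ← mul_assoc, ← ENNReal.ofReal_mul (by positivity),
      aux_real_coeff hL.le hq0 m]
  -- geometric sum bound
  have hsum : ∀ N : ℕ, ∑ m ∈ Finset.range N, ENNReal.ofReal (Real.sqrt L * r ^ (m+1))
      ≤ ENNReal.ofReal K := by
    intro N
    rw [← ENNReal.ofReal_sum_of_nonneg (fun m _ => by positivity)]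
    apply ENNReal.ofReal_le_ofReal
    have hterm : ∀ m ∈ Finset.range N, Real.sqrt L * r ^ (m+1) ≤ Real.sqrt L * r ^ m := by
      intro m _
      apply mul_le_mul_of_nonneg_left _ (Real.sqrt_nonneg _)
      exact pow_le_pow_of_le_one hr0.le hr1.le (by omega)
    refine le_trans (Finset.sum_le_sum hterm) ?_
    rw [← Finset.mul_sum, hKdef]
    apply mul_le_mul_of_nonneg_left _ (Real.sqrt_nonneg _)
    have hsummable : Summable fun m : ℕ => r ^ m := summable_geometric_of_lt_one hr0.le hr1
    refine le_trans (Summable.sum_le_tsum (Finset.range N) (fun m _ => by positivity) hsummable) ?_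
    rw [tsum_geometric_of_lt_one hr0.le hr1]
  -- uniform bound for ∫ S N ^ q
  have hSq : ∀ N : ℕ, ∫⁻ ω, S N ω ^ q ∂P ≤ ENNReal.ofReal (K ^ q) * Iq := by
    intro N
    have hml : (∫⁻ ω, S N ω ^ q ∂P) ^ (1/q)
        ≤ ENNReal.ofReal K * Iq ^ (1/q) := by
      calc (∫⁻ ω, S N ω ^ q ∂P) ^ (1/q)
          ≤ (∫⁻ ω, (∑ m ∈ Finset.range N, M (m+1) ω) ^ q ∂P) ^ (1/q) := by
            apply ENNReal.rpow_le_rpow _ (by positivity : (0:ℝ) ≤ 1/q)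
            apply lintegral_mono_ae
            filter_upwards [hbdry t ht] with ω hω
            exact ENNReal.rpow_le_rpow (hchain ω hω.1 hω.2 N) hq0.le
        _ ≤ ∑ m ∈ Finset.range N, (∫⁻ ω, M (m+1) ω ^ q ∂P) ^ (1/q) :=
            aux_minkowski_sum P hq1 (fun m => M (m+1)) (fun m => hMmeas (m+1)) N
        _ ≤ ∑ m ∈ Finset.range N, ENNReal.ofReal (Real.sqrt L * r ^ (m+1)) * Iq ^ (1/q) :=
            Finset.sum_le_sum fun m _ => hA (m+1)
        _ = (∑ m ∈ Finset.range N, ENNReal.ofReal (Real.sqrt L * r ^ (m+1))) * Iq ^ (1/q) :=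
            (Finset.sum_mul _ _ _).symm
        _ ≤ ENNReal.ofReal K * Iq ^ (1/q) := mul_le_mul_left (hsum N) _
    calc ∫⁻ ω, S N ω ^ q ∂P
        = ((∫⁻ ω, S N ω ^ q ∂P) ^ (1/q : ℝ)) ^ q := by
          rw [← ENNReal.rpow_mul, one_div, inv_mul_cancel₀ hq0.ne', ENNReal.rpow_one]
      _ ≤ (ENNReal.ofReal K * Iq ^ (1/q : ℝ)) ^ q := ENNReal.rpow_le_rpow hml hq0.le
      _ = ENNReal.ofReal (K ^ q) * Iq := by
          rw [ENNReal.mul_rpow_of_nonneg _ _ hq0.le, ← ENNReal.rpow_mul,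
            ENNReal.ofReal_rpow_of_nonneg hK0 hq0.le]
          congr 1
          rw [one_div, inv_mul_cancel₀ hq0.ne', ENNReal.rpow_one]
  -- a.e. pointwise bound on the sup over [0,1]
  have hae_main : ∀ᵐ ω ∂P, (⨆ x : Set.Icc (0:ℝ) 1, ENNReal.ofReal |X t x.1 ω|) ^ p
      ≤ (⨆ N, S N ω ^ q) + 1 := by
    filter_upwards [hcont] with ω hωc
    have hfq : (⨆ x : Set.Icc (0:ℝ) 1, ENNReal.ofReal |X t x.1 ω|) ≤ ⨆ N, S N ω := by
      refine iSup_le fun x => ?_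
      have hxc : ContinuousOn (fun y => X t y ω) (Set.Icc 0 1) := by
        have hmap : Set.MapsTo (fun y : ℝ => ((t, y) : ℝ × ℝ))
            (Set.Icc 0 1) (Set.Ici 0 ×ˢ Set.Icc 0 1) := fun y hy => ⟨ht, hy⟩
        exact hωc.comp ((continuous_const.prodMk continuous_id).continuousOn) hmap
      have hmem : ∀ N : ℕ, ((⌊x.1 * 2^N⌋₊ : ℝ)/2^N) ∈ Set.Icc (0:ℝ) 1 := by
        intro N
        apply h01
        calc ⌊x.1 * 2^N⌋₊ ≤ ⌊((2^N : ℕ) : ℝ)⌋₊ := by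
              apply Nat.floor_le_floor
              push_cast
              nlinarith [x.2.1, x.2.2, (show (0:ℝ) < 2^N by positivity)]
          _ = 2^N := Nat.floor_natCast _
      have hseq : Tendsto (fun N : ℕ => (⌊x.1 * 2^N⌋₊ : ℝ)/2^N) atTop
          (nhdsWithin x.1 (Set.Icc 0 1)) :=
        tendsto_nhdsWithin_of_tendsto_nhds_of_eventually_within _
          (aux_floor_div_pow_tendsto x.2.1) (Filter.Eventually.of_forall hmem)
      have htend : Tendsto (fun N : ℕ => ENNReal.ofReal |X t ((⌊x.1 * 2^N⌋₊ : ℝ)/2^N) ω|)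
          atTop (nhds (ENNReal.ofReal |X t x.1 ω|)) := by
        have h1 : Tendsto (fun N : ℕ => X t ((⌊x.1 * 2^N⌋₊ : ℝ)/2^N) ω) atTop
            (nhds (X t x.1 ω)) := (hxc x.1 x.2).tendsto.comp hseq
        exact (ENNReal.continuous_ofReal.tendsto _).comp ((continuous_abs.tendsto _).comp h1)
      refine le_of_tendsto' htend fun N => ?_
      have hfl : ⌊x.1 * 2^N⌋₊ ∈ Finset.range (2^N + 1) := by
        rw [Finset.mem_range, Nat.lt_succ_iff]
        calc ⌊x.1 * 2^N⌋₊ ≤ ⌊((2^N : ℕ) : ℝ)⌋₊ := by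
              apply Nat.floor_le_floor
              push_cast
              nlinarith [x.2.1, x.2.2, (show (0:ℝ) < 2^N by positivity)]
          _ = 2^N := Nat.floor_natCast _
      calc ENNReal.ofReal |X t ((⌊x.1 * 2^N⌋₊ : ℝ)/2^N) ω|
          ≤ S N ω := Finset.le_sup (f := fun k : ℕ => G ((k:ℝ)/2^N) ω) hfl
        _ ≤ ⨆ N, S N ω := le_iSup (fun N => S N ω) N
    calc (⨆ x : Set.Icc (0:ℝ) 1, ENNReal.ofReal |X t x.1 ω|) ^ p
        ≤ (⨆ x : Set.Icc (0:ℝ) 1, ENNReal.ofReal |X t x.1 ω|) ^ q + 1 :=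
          aux_rpow_le_rpow_add_one hp0 hpq
      _ ≤ (⨆ N, S N ω) ^ q + 1 := by
          exact add_le_add (ENNReal.rpow_le_rpow hfq hq0.le) le_rfl
      _ ≤ (⨆ N, S N ω ^ q) + 1 :=
          add_le_add (aux_iSup_rpow_le (hSmono ω) hq0) le_rfl
  -- put everything together
  have hfinal : ∫⁻ ω, (⨆ x : Set.Icc (0:ℝ) 1, ENNReal.ofReal |X t x.1 ω|) ^ p ∂P ≤ D := by
    calc ∫⁻ ω, (⨆ x : Set.Icc (0:ℝ) 1, ENNReal.ofReal |X t x.1 ω|) ^ p ∂P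
        ≤ ∫⁻ ω, ((⨆ N, S N ω ^ q) + 1) ∂P := lintegral_mono_ae hae_main
      _ = ∫⁻ ω, (⨆ N, S N ω ^ q) ∂P + 1 := by
          rw [lintegral_add_right _ measurable_const]
          simp
      _ = (⨆ N, ∫⁻ ω, S N ω ^ q ∂P) + 1 := by
          have hSqmeas : ∀ N, AEMeasurable (fun ω => S N ω ^ q) P := fun N =>
            ENNReal.continuous_rpow_const.measurable.comp_aemeasurable (hSmeas N)
          rw [lintegral_iSup' hSqmeas (Filter.Eventually.of_forall fun ω =>
            fun a b hab => ENNReal.rpow_le_rpow (hSmono ω hab) hq0.le)]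
      _ ≤ ENNReal.ofReal (K ^ q) * Iq + 1 := add_le_add (iSup_le hSq) le_rfl
      _ = D := hDdef.symm
  refine le_trans hfinal ?_
  calc D = ENNReal.ofReal D.toReal := (ENNReal.ofReal_toReal hDtop).symm
    _ ≤ ENNReal.ofReal (D.toReal + 1) := ENNReal.ofReal_le_ofReal (by linarith)
end

section
/- Let X be a continuous centered Gaussian field on [0,∞)×[0,1] as in the context, with increment variance bound Var(X(t,x) − X(s,y)) ≤ L(√|t−s| + |x−y|) and X(t,0) = X(t,1) = 0 a.s. Then for every p ∈ [1,∞) and every γ ∈ (0, 1/4) there is a constant C > 0 such that for all s, t ≥ 0: E[(sup_{x ∈ [0,1]} |X(t,x) − X(s,x)|)^p] ≤ C·|t−s|^{γp}. -/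
open Real MeasureTheory ProbabilityTheory
open scoped ENNReal NNReal

noncomputable def gmK (q : ℕ) : ℝ≥0∞ :=
  ∫⁻ z : ℝ, (ENNReal.ofReal |z|) ^ (q : ℝ) ∂(gaussianReal 0 1)

lemma gmK_lt_top {q : ℕ} (hq : Even q) : gmK q < ⊤ := by
  have hι : Integrable (fun z : ℝ => gaussianPDFReal 0 1 z * |z| ^ q) := by
    have h1 : Integrable (fun z : ℝ => z ^ q * Real.exp (-(1/2) * z ^ 2)) := by
      have := integrable_rpow_mul_exp_neg_mul_sq (b := 1/2) (by norm_num) (s := (q:ℝ))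
        (by exact_mod_cast neg_one_lt_zero.trans_le (Nat.cast_nonneg q))
      simpa [Real.rpow_natCast] using this
    have h2 : Integrable (fun z : ℝ => (Real.sqrt (2 * π * 1))⁻¹ *
        (z ^ q * Real.exp (-(1/2) * z ^ 2))) := h1.const_mul _
    refine h2.congr (Filter.Eventually.of_forall fun z => ?_)
    simp only [gaussianPDFReal]
    rw [hq.pow_abs]
    push_cast
    ring_nf
  rw [gmK, gaussianReal_of_var_ne_zero 0 one_ne_zero]
  rw [lintegral_withDensity_eq_lintegral_mul _ (measurable_gaussianPDF 0 1)
    (by fun_prop)]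
  have heq : ∀ z : ℝ, (gaussianPDF 0 1 * fun z => (ENNReal.ofReal |z|) ^ (q:ℝ)) z
      = ENNReal.ofReal (gaussianPDFReal 0 1 z * |z| ^ q) := by
    intro z
    simp only [Pi.mul_apply, gaussianPDF]
    rw [ENNReal.rpow_natCast, ← ENNReal.ofReal_pow (abs_nonneg z),
      ← ENNReal.ofReal_mul (gaussianPDFReal_nonneg 0 1 z)]
  simp_rw [heq]
  exact hι.lintegral_lt_top

lemma aemeasurable_of_map_gaussian {Ω : Type*} [MeasurableSpace Ω] {P : Measure Ω}
    {Z : Ω → ℝ} {v : ℝ≥0} (h : Measure.map Z P = gaussianReal 0 v) :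
    AEMeasurable Z P := by
  by_contra hc
  rw [Measure.map_of_not_aemeasurable hc] at h
  have : (gaussianReal 0 v) Set.univ = 1 := measure_univ
  rw [← h] at this
  simp at this

lemma lintegral_abs_rpow_of_map_gaussian {Ω : Type*} [MeasurableSpace Ω] {P : Measure Ω}
    {Z : Ω → ℝ} {v : ℝ≥0} (h : Measure.map Z P = gaussianReal 0 v) (q : ℕ) (hq : 0 < q) :
    ∫⁻ ω, (ENNReal.ofReal |Z ω|) ^ (q : ℝ) ∂P
      = (ENNReal.ofReal (Real.sqrt v)) ^ (q : ℝ) * gmK q := by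
  have hZ : AEMeasurable Z P := aemeasurable_of_map_gaussian h
  have hfm : Measurable fun z : ℝ => (ENNReal.ofReal |z|) ^ (q : ℝ) := by fun_prop
  rw [← lintegral_map' hfm.aemeasurable hZ, h]
  rcases eq_or_ne v 0 with hv | hv
  · subst hv
    rw [gaussianReal_zero_var, lintegral_dirac' _ hfm]
    simp [ENNReal.zero_rpow_of_pos (by positivity : (0:ℝ) < (q:ℝ)), Real.sqrt_eq_zero']
  · have hmap : gaussianReal 0 v
        = (gaussianReal 0 1).map (· * Real.sqrt v) := by
      rw [gaussianReal_map_mul_const (Real.sqrt v)]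
      congr 1
      · simp
      · ext
        simp [Real.sq_sqrt v.coe_nonneg]
    rw [hmap, lintegral_map' hfm.aemeasurable (by fun_prop)]
    have : ∀ z : ℝ, (ENNReal.ofReal |z * Real.sqrt v|) ^ (q : ℝ)
        = (ENNReal.ofReal (Real.sqrt v)) ^ (q : ℝ) * (ENNReal.ofReal |z|) ^ (q : ℝ) := by
      intro z
      rw [abs_mul, abs_of_nonneg (Real.sqrt_nonneg _),
        ENNReal.ofReal_mul (abs_nonneg z),
        ENNReal.mul_rpow_of_nonneg _ _ (by positivity), mul_comm]
    simp_rw [this]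
    rw [lintegral_const_mul' _ _ (by simp), gmK]

lemma aemeasurable_finset_sup {α : Type*} [MeasurableSpace α] {μ : Measure α}
    {ι : Type*} (s : Finset ι) {f : ι → α → ℝ≥0∞}
    (hf : ∀ i ∈ s, AEMeasurable (f i) μ) :
    AEMeasurable (fun a => s.sup (fun i => f i a)) μ := by
  classical
  induction s using Finset.induction_on with
  | empty => simp only [Finset.sup_empty]; exact aemeasurable_const
  | @insert i s hni ih =>
    simp only [Finset.sup_insert]
    exact (hf i (Finset.mem_insert_self i s)).sup
      (ih fun j hj => hf j (Finset.mem_insert_of_mem hj))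

lemma enn_rpow_iSup {g : ℕ → ℝ≥0∞} {r : ℝ} (hr : 0 < r) :
    (⨆ n, g n) ^ r = ⨆ n, (g n) ^ r := by
  refine Monotone.map_iSup_of_continuousAt ?_ (fun x y hxy => ENNReal.rpow_le_rpow hxy hr.le) ?_
  · exact ENNReal.continuous_rpow_const.continuousAt
  · simp [ENNReal.zero_rpow_of_pos hr]

lemma lp_finset_sum_le {α : Type*} [MeasurableSpace α] {μ : Measure α} {q : ℝ} (hq : 1 ≤ q)
    {ι : Type*} (s : Finset ι) {f : ι → α → ℝ≥0∞} (hf : ∀ i ∈ s, AEMeasurable (f i) μ) :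
    (∫⁻ a, (∑ i ∈ s, f i a) ^ q ∂μ) ^ (1/q)
      ≤ ∑ i ∈ s, (∫⁻ a, f i a ^ q ∂μ) ^ (1/q) := by
  classical
  induction s using Finset.induction_on with
  | empty =>
    have hq0 : (0:ℝ) < q := by linarith
    simp [ENNReal.zero_rpow_of_pos hq0,
      ENNReal.zero_rpow_of_pos (by positivity : (0:ℝ) < 1/q), hq0]
  | @insert i s hni ih =>
    simp only [Finset.sum_insert hni]
    have h1 : AEMeasurable (f i) μ := hf i (Finset.mem_insert_self i s)
    have h2 : AEMeasurable (fun a => ∑ j ∈ s, f j a) μ :=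
      Finset.aemeasurable_fun_sum s fun j hj => hf j (Finset.mem_insert_of_mem hj)
    calc (∫⁻ a, (f i a + ∑ j ∈ s, f j a) ^ q ∂μ) ^ (1/q)
        ≤ (∫⁻ a, f i a ^ q ∂μ) ^ (1/q) + (∫⁻ a, (∑ j ∈ s, f j a) ^ q ∂μ) ^ (1/q) :=
          ENNReal.lintegral_Lp_add_le h1 h2 hq
      _ ≤ _ := add_le_add_right (ih fun j hj => hf j (Finset.mem_insert_of_mem hj)) _

lemma lp_tsum_le {α : Type*} [MeasurableSpace α] {μ : Measure α} {q : ℝ} (hq : 1 ≤ q)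
    {f : ℕ → α → ℝ≥0∞} (hf : ∀ n, AEMeasurable (f n) μ) :
    (∫⁻ a, (∑' n, f n a) ^ q ∂μ) ^ (1/q)
      ≤ ∑' n, (∫⁻ a, f n a ^ q ∂μ) ^ (1/q) := by
  have hq0 : (0:ℝ) < q := by linarith
  have hts : ∀ a : α, (∑' n, f n a) = ⨆ m, ∑ n ∈ Finset.range m, f n a := by
    intro a; exact ENNReal.tsum_eq_iSup_nat
  have hmono : ∀ a : α, Monotone fun m => (∑ n ∈ Finset.range m, f n a) ^ q := by
    intro a m m' hmm'
    exact ENNReal.rpow_le_rpow (Finset.sum_le_sum_of_subset (Finset.range_subset_range.2 hmm')) hq0.le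
  calc (∫⁻ a, (∑' n, f n a) ^ q ∂μ) ^ (1/q)
      = (∫⁻ a, ⨆ m, (∑ n ∈ Finset.range m, f n a) ^ q ∂μ) ^ (1/q) := by
        congr 1
        refine lintegral_congr fun a => ?_
        rw [hts a, enn_rpow_iSup hq0]
    _ = (⨆ m, ∫⁻ a, (∑ n ∈ Finset.range m, f n a) ^ q ∂μ) ^ (1/q) := by
        congr 1
        refine lintegral_iSup' (fun m => ?_) (Filter.Eventually.of_forall hmono)
        exact (Finset.aemeasurable_fun_sum _ fun j _ => hf j).pow_const _
    _ = ⨆ m, (∫⁻ a, (∑ n ∈ Finset.range m, f n a) ^ q ∂μ) ^ (1/q) :=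
        enn_rpow_iSup (by positivity)
    _ ≤ ⨆ m, ∑ n ∈ Finset.range m, (∫⁻ a, f n a ^ q ∂μ) ^ (1/q) := by
        exact iSup_mono fun m => lp_finset_sum_le hq _ fun j _ => hf j
    _ ≤ ∑' n, (∫⁻ a, f n a ^ q ∂μ) ^ (1/q) :=
        iSup_le fun m => ENNReal.sum_le_tsum _

lemma nat_floor_double (y : ℝ) :
    ⌊2*y⌋₊ = 2*⌊y⌋₊ ∨ ⌊2*y⌋₊ = 2*⌊y⌋₊ + 1 := by
  rcases le_or_gt 0 y with hy | hy
  · have h1 : 2*⌊y⌋₊ ≤ ⌊2*y⌋₊ := by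
      refine Nat.le_floor ?_
      push_cast
      nlinarith [Nat.floor_le hy]
    have h2 : ⌊2*y⌋₊ < 2*⌊y⌋₊ + 2 := by
      have := Nat.lt_floor_add_one y
      rcases le_or_gt 0 (2*y) with h2y | h2y
      · have := Nat.floor_le h2y
        have h3 : (⌊2*y⌋₊ : ℝ) < 2*⌊y⌋₊ + 2 := by nlinarith
        exact_mod_cast Nat.cast_lt.mp (by exact_mod_cast h3)
      · rw [Nat.floor_of_nonpos h2y.le]; omega
    omega
  · rw [Nat.floor_of_nonpos hy.le, Nat.floor_of_nonpos (by linarith)]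
    left; ring

/-- Deterministic dyadic chaining bound for a continuous function on `[0,1]`. -/
lemma chaining_bound {F : ℝ → ℝ} (hF : ContinuousOn F (Set.Icc 0 1))
    {x : ℝ} (hx : x ∈ Set.Icc (0:ℝ) 1)
    (N : ℕ) (M : ℝ≥0∞) (D : ℕ → ℝ≥0∞)
    (hM : ∀ k ∈ Finset.range (2^N + 1), ENNReal.ofReal |F ((k:ℝ)/2^N)| ≤ M)
    (hD : ∀ n, N < n → ∀ k ∈ Finset.range (2^n),
      ENNReal.ofReal |F (((k:ℝ)+1)/2^n) - F ((k:ℝ)/2^n)| ≤ D n) :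
    ENNReal.ofReal |F x| ≤ M + ∑' j : ℕ, D (N + 1 + j) := by
  obtain ⟨hx0, hx1⟩ := hx
  set xm : ℕ → ℝ := fun i => (⌊x * 2^i⌋₊ : ℝ) / 2^i with hxm
  have hfloor_le : ∀ i, (⌊x * 2^i⌋₊ : ℝ) ≤ x * 2^i := fun i => Nat.floor_le (by positivity)
  have hxm_le : ∀ i, xm i ≤ x := by
    intro i
    rw [hxm, div_le_iff₀ (by positivity)]
    exact hfloor_le i
  have hxm_ge : ∀ i, x - (1/2)^i < xm i := by
    intro i
    rw [hxm, lt_div_iff₀ (by positivity)]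
    have := Nat.lt_floor_add_one (x * 2^i)
    have h2 : ((1:ℝ)/2)^i * 2^i = 1 := by
      rw [← mul_pow]; norm_num
    nlinarith
  have hxm_mem : ∀ i, xm i ∈ Set.Icc (0:ℝ) 1 := by
    intro i
    exact ⟨by positivity, (hxm_le i).trans hx1⟩
  -- key induction
  have key : ∀ m : ℕ, ENNReal.ofReal |F (xm (N + m))|
      ≤ M + ∑ j ∈ Finset.range m, D (N + 1 + j) := by
    intro m
    induction m with
    | zero =>
      simp only [Nat.add_zero, Finset.range_zero, Finset.sum_empty, add_zero]
      refine hM ⌊x * 2^N⌋₊ ?_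
      rw [Finset.mem_range]
      have h2 : ⌊x * 2^N⌋₊ ≤ 2^N := by
        calc ⌊x * 2^N⌋₊ ≤ ⌊((2^N : ℕ) : ℝ)⌋₊ := by
              refine Nat.floor_mono ?_
              push_cast
              nlinarith [pow_pos (by norm_num : (0:ℝ) < 2) N]
          _ = 2^N := Nat.floor_natCast _
      omega
    | succ m ih =>
      have hi : x * 2^(N+m+1) = 2 * (x * 2^(N+m)) := by ring
      have hdi := nat_floor_double (x * 2^(N+m))
      rw [← hi] at hdi
      rcases hdi with heq | hsucc
      · have hxeq : xm (N + (m+1)) = xm (N + m) := by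
          rw [hxm]
          show (⌊x * 2^(N+m+1)⌋₊ : ℝ) / 2^(N+m+1) = _
          rw [heq]
          push_cast
          field_simp
          ring
        rw [hxeq]
        refine ih.trans (add_le_add_right ?_ _)
        exact Finset.sum_le_sum_of_subset (Finset.range_subset_range.2 (Nat.le_succ m))
      · -- xm jumps by 2^{-(N+m+1)}
        set k : ℕ := 2*⌊x * 2^(N+m)⌋₊ with hk
        have hklt : k < 2^(N+m+1) := by
          have h1 : ((k:ℝ) + 1) ≤ x * 2^(N+m+1) := by
            have := Nat.floor_le (by positivity : (0:ℝ) ≤ x * 2^(N+m+1))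
            rw [hsucc] at this
            push_cast at this ⊢
            linarith
          have h2 : x * 2^(N+m+1) ≤ 2^(N+m+1) := by nlinarith [pow_pos (by norm_num : (0:ℝ) < 2) (N+m+1)]
          have h3 : (k:ℝ) < ((2^(N+m+1) : ℕ) : ℝ) := by push_cast; linarith
          exact_mod_cast h3
        have hxm1 : xm (N + (m+1)) = ((k:ℝ)+1) / 2^(N+m+1) := by
          rw [hxm]
          show (⌊x * 2^(N+m+1)⌋₊ : ℝ) / 2^(N+m+1) = _
          rw [hsucc]; push_cast; ring_nf
        have hxm0 : xm (N + m) = (k:ℝ) / 2^(N+m+1) := by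
          rw [hxm, hk]
          push_cast
          rw [pow_succ]
          field_simp
        have htri : |F (((k:ℝ)+1)/2^(N+m+1))|
            ≤ |F ((k:ℝ)/2^(N+m+1))| + |F (((k:ℝ)+1)/2^(N+m+1)) - F ((k:ℝ)/2^(N+m+1))| := by
          have h := abs_add_le (F ((k:ℝ)/2^(N+m+1)))
            (F (((k:ℝ)+1)/2^(N+m+1)) - F ((k:ℝ)/2^(N+m+1)))
          rwa [add_sub_cancel] at h
        rw [hxm1]
        have hidx : N + 1 + m = N + m + 1 := by omega
        calc ENNReal.ofReal |F (((k:ℝ)+1)/2^(N+m+1))|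
            ≤ ENNReal.ofReal (|F ((k:ℝ)/2^(N+m+1))| + |F (((k:ℝ)+1)/2^(N+m+1)) - F ((k:ℝ)/2^(N+m+1))|) :=
              ENNReal.ofReal_le_ofReal htri
          _ ≤ ENNReal.ofReal |F ((k:ℝ)/2^(N+m+1))| + ENNReal.ofReal |F (((k:ℝ)+1)/2^(N+m+1)) - F ((k:ℝ)/2^(N+m+1))| :=
              ENNReal.ofReal_add_le
          _ = ENNReal.ofReal |F (xm (N+m))| + ENNReal.ofReal |F (((k:ℝ)+1)/2^(N+m+1)) - F ((k:ℝ)/2^(N+m+1))| := by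
              rw [hxm0]
          _ ≤ (M + ∑ j ∈ Finset.range m, D (N + 1 + j)) + D (N+m+1) := by
              refine add_le_add ih ?_
              exact hD (N+m+1) (by omega) k (Finset.mem_range.2 hklt)
          _ = M + ∑ j ∈ Finset.range (m+1), D (N + 1 + j) := by
              rw [Finset.sum_range_succ, add_assoc, hidx]
  -- limit
  have hxm_tendsto : Filter.Tendsto xm Filter.atTop (nhds x) := by
    have h1 : Filter.Tendsto (fun i : ℕ => x - (1/2:ℝ)^i) Filter.atTop (nhds x) := by
      have := tendsto_pow_atTop_nhds_zero_of_lt_one (by norm_num : (0:ℝ) ≤ 1/2) (by norm_num : (1/2:ℝ) < 1)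
      simpa using (tendsto_const_nhds (x := x)).sub this
    exact tendsto_of_tendsto_of_tendsto_of_le_of_le h1 tendsto_const_nhds
      (fun i => (hxm_ge i).le) hxm_le
  have hFx : Filter.Tendsto (fun i => ENNReal.ofReal |F (xm i)|) Filter.atTop
      (nhds (ENNReal.ofReal |F x|)) := by
    have h1 : Filter.Tendsto xm Filter.atTop (nhdsWithin x (Set.Icc (0:ℝ) 1)) := by
      rw [tendsto_nhdsWithin_iff]
      exact ⟨hxm_tendsto, Filter.Eventually.of_forall hxm_mem⟩
    have h2 := (hF x ⟨hx0, hx1⟩).tendsto.comp h1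
    exact (ENNReal.continuous_ofReal.tendsto _).comp ((continuous_abs.tendsto _).comp h2)
  refine le_of_tendsto hFx ?_
  filter_upwards [Filter.eventually_ge_atTop N] with i hi
  have : i = N + (i - N) := by omega
  rw [this]
  exact (key (i - N)).trans (add_le_add_right (ENNReal.sum_le_tsum _) _)

lemma lintegral_rpow_le_rpow_of_exponent_le {Ω : Type*} [MeasurableSpace Ω] {P : Measure Ω}
    [IsProbabilityMeasure P] {f : Ω → ℝ≥0∞} (hf : AEMeasurable f P)
    {p q : ℝ} (hp : 0 < p) (hpq : p < q) :
    ∫⁻ ω, f ω ^ p ∂P ≤ (∫⁻ ω, f ω ^ q ∂P) ^ (p / q) := by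
  have hq : 0 < q := hp.trans hpq
  have ha : 1 < q / p := (one_lt_div hp).2 hpq
  have h := ENNReal.lintegral_mul_le_Lp_mul_Lq P (Real.HolderConjugate.conjExponent ha)
    (hf.pow_const p) (aemeasurable_const (b := (1:ℝ≥0∞)))
  simp only [Pi.mul_apply, mul_one, ENNReal.one_rpow, lintegral_one, measure_univ,
    ENNReal.one_rpow] at h
  have h2 : ∀ ω : Ω, (f ω ^ p) ^ (q/p) = f ω ^ q := by
    intro ω
    rw [← ENNReal.rpow_mul]
    congr 1
    field_simp
  simp_rw [h2] at h
  rw [one_div_div] at h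
  simpa using h

-- union bound for finset sup
lemma lintegral_finset_sup_rpow_le {Ω : Type*} [MeasurableSpace Ω] {P : Measure Ω}
    {m : ℕ} {g : ℕ → Ω → ℝ≥0∞} {q : ℝ} (hq : 0 < q)
    (hmeas : ∀ k ∈ Finset.range m, AEMeasurable (g k) P)
    {b : ℝ≥0∞} (hg : ∀ k ∈ Finset.range m, ∫⁻ ω, (g k ω) ^ q ∂P ≤ b) :
    ∫⁻ ω, ((Finset.range m).sup (fun k => g k ω)) ^ q ∂P ≤ m * b := by
  have hmono : Monotone fun x : ℝ≥0∞ => x ^ q := fun x y hxy => ENNReal.rpow_le_rpow hxy hq.le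
  have h1 : ∀ ω, ((Finset.range m).sup (fun k => g k ω)) ^ q
      ≤ ∑ k ∈ Finset.range m, (g k ω) ^ q := by
    intro ω
    rw [Finset.comp_sup_eq_sup_comp (fun x : ℝ≥0∞ => x ^ q)
      (fun x y => hmono.map_sup x y) (by simp [ENNReal.zero_rpow_of_pos hq])]
    exact Finset.sup_le fun k hk => Finset.single_le_sum (fun i _ => zero_le) hk
  calc ∫⁻ ω, ((Finset.range m).sup (fun k => g k ω)) ^ q ∂P
      ≤ ∫⁻ ω, ∑ k ∈ Finset.range m, (g k ω) ^ q ∂P := lintegral_mono h1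
    _ = ∑ k ∈ Finset.range m, ∫⁻ ω, (g k ω) ^ q ∂P :=
        lintegral_finset_sum' _ fun k hk => (hmeas k hk).pow_const _
    _ ≤ ∑ _k ∈ Finset.range m, b := Finset.sum_le_sum hg
    _ = m * b := by simp [mul_comm]

-- real arithmetic: the tail term
lemma real_tail_eq (u : ℕ) (hu : 0 < u) {L Kr : ℝ} (hL : 0 ≤ L) (hK : 0 ≤ Kr) (n : ℕ) :
    ((2:ℝ)^n * (Real.sqrt (L * (1/2)^n)) ^ (2*u) * Kr) ^ (1/(2*u:ℝ))
      = Real.sqrt L * Kr ^ (1/(2*u:ℝ)) * ((2:ℝ) ^ ((1:ℝ)/(2*u) - 1/2)) ^ n := by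
  have hu' : (0:ℝ) < 2*u := by positivity
  set s : ℝ := 1/(2*u:ℝ) with hs
  have hs0 : 0 < s := by positivity
  have hu0 : (u:ℝ) ≠ 0 := Nat.cast_ne_zero.2 hu.ne'
  have h1 : (Real.sqrt (L * (1/2)^n)) ^ (2*u) = L^u * ((1:ℝ)/2)^(n*u) := by
    rw [pow_mul, Real.sq_sqrt (by positivity), mul_pow, ← pow_mul]
  rw [h1]
  have h2 : ((2:ℝ)^n * (L^u * ((1:ℝ)/2)^(n*u)) * Kr) ^ s
      = ((2:ℝ)^n)^s * (L^u)^s * (((1:ℝ)/2)^(n*u))^s * Kr^s := by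
    rw [Real.mul_rpow (by positivity) hK, Real.mul_rpow (by positivity) (by positivity),
      Real.mul_rpow (by positivity) (by positivity)]
    ring
  rw [h2]
  have h3 : (L^u)^s = Real.sqrt L := by
    rw [← Real.rpow_natCast L u, ← Real.rpow_mul hL, Real.sqrt_eq_rpow]
    congr 1
    rw [hs]
    field_simp
  have h4 : ((2:ℝ)^n)^s * (((1:ℝ)/2)^(n*u))^s = ((2:ℝ) ^ (s - 1/2)) ^ n := by
    have e1 : ((2:ℝ)^n)^s = (2:ℝ) ^ ((n:ℝ) * s) := by
      rw [← Real.rpow_natCast 2 n, ← Real.rpow_mul (by norm_num)]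
    have e2 : (((1:ℝ)/2)^(n*u))^s = (2:ℝ) ^ (-(((n*u:ℕ):ℝ) * s)) := by
      rw [one_div, ← Real.rpow_natCast (2:ℝ)⁻¹ (n*u), ← Real.rpow_mul (by norm_num),
        ← Real.rpow_neg_one (2:ℝ), ← Real.rpow_mul (by norm_num)]
      ring_nf
    rw [e1, e2, ← Real.rpow_add (by norm_num), ← Real.rpow_natCast ((2:ℝ) ^ (s - 1/2)) n,
      ← Real.rpow_mul (by norm_num)]
    congr 1
    push_cast
    have : (u:ℝ) * s = 1/2 := by rw [hs]; field_simp
    have hns : (n:ℝ) * s - (n:ℝ) * ((u:ℝ) * s) = (s - 1/2) * n := by rw [this]; ring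
    calc (n:ℝ) * s + -((n:ℝ) * (u:ℝ) * s) = (n:ℝ) * s - (n:ℝ) * ((u:ℝ)*s) := by ring
      _ = (s - 1/2) * n := hns
  calc ((2:ℝ)^n)^s * (L^u)^s * (((1:ℝ)/2)^(n*u))^s * Kr^s
      = (L^u)^s * Kr^s * (((2:ℝ)^n)^s * (((1:ℝ)/2)^(n*u))^s) := by ring
    _ = Real.sqrt L * Kr ^ s * ((2:ℝ) ^ (s - 1/2)) ^ n := by rw [h3, h4]

lemma real_head_bound (u : ℕ) (hu : 0 < u) {L Kr h : ℝ} (hL : 0 ≤ L) (hK : 0 ≤ Kr)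
    (hh : 0 < h) {N : ℕ} (hN : (2:ℝ)^N ≤ 2 / Real.sqrt h) :
    (((2:ℝ)^N + 1) * ((Real.sqrt (L * Real.sqrt h)) ^ (2*u) * Kr)) ^ (1/(2*u:ℝ))
      ≤ (4*Kr) ^ (1/(2*u:ℝ)) * Real.sqrt L * h ^ ((1:ℝ)/4 - 1/(2*(2*u:ℝ))) := by
  have hu0 : (u:ℝ) ≠ 0 := Nat.cast_ne_zero.2 hu.ne'
  have hsh : 0 < Real.sqrt h := Real.sqrt_pos.2 hh
  set s : ℝ := 1/(2*u:ℝ) with hs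
  have hs0 : 0 < s := by positivity
  have h1 : (Real.sqrt (L * Real.sqrt h)) ^ (2*u) = L^u * Real.sqrt h ^ u := by
    rw [pow_mul, Real.sq_sqrt (by positivity), mul_pow]
  have h2 : ((2:ℝ)^N + 1) ≤ 4 / Real.sqrt h := by
    have : ((2:ℝ)^N + 1) ≤ 2 * (2:ℝ)^N := by
      have : (1:ℝ) ≤ 2^N := one_le_pow₀ (by norm_num)
      linarith
    calc ((2:ℝ)^N + 1) ≤ 2 * (2:ℝ)^N := this
      _ ≤ 2 * (2 / Real.sqrt h) := by linarith
      _ = 4 / Real.sqrt h := by ring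
  have h3 : ((2:ℝ)^N + 1) * ((Real.sqrt (L * Real.sqrt h)) ^ (2*u) * Kr)
      ≤ 4 * Kr * L^u * Real.sqrt h ^ (u-1) := by
    rw [h1]
    have hpow : Real.sqrt h ^ u = Real.sqrt h ^ (u-1) * Real.sqrt h := by
      rw [← pow_succ]
      congr 1
      omega
    calc ((2:ℝ)^N + 1) * (L^u * Real.sqrt h ^ u * Kr)
        ≤ (4 / Real.sqrt h) * (L^u * Real.sqrt h ^ u * Kr) := by
          refine mul_le_mul_of_nonneg_right h2 (by positivity)
      _ = 4 * Kr * L^u * Real.sqrt h ^ (u-1) := by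
          rw [hpow]
          field_simp
  calc (((2:ℝ)^N + 1) * ((Real.sqrt (L * Real.sqrt h)) ^ (2*u) * Kr)) ^ s
      ≤ (4 * Kr * L^u * Real.sqrt h ^ (u-1)) ^ s := by
        refine Real.rpow_le_rpow (by positivity) h3 hs0.le
    _ = (4*Kr) ^ s * Real.sqrt L * h ^ ((1:ℝ)/4 - 1/(2*(2*u:ℝ))) := by
        rw [Real.mul_rpow (by positivity) (by positivity),
          Real.mul_rpow (by positivity) (by positivity)]
        have e1 : ((L:ℝ)^u)^s = Real.sqrt L := by
          rw [← Real.rpow_natCast L u, ← Real.rpow_mul hL, Real.sqrt_eq_rpow]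
          congr 1
          rw [hs]; field_simp
        have e2 : (Real.sqrt h ^ (u-1))^s = h ^ ((1:ℝ)/4 - 1/(2*(2*u:ℝ))) := by
          rw [← Real.rpow_natCast (Real.sqrt h) (u-1), ← Real.rpow_mul hsh.le,
            Real.sqrt_eq_rpow, ← Real.rpow_mul hh.le]
          congr 1
          have hcast : ((u-1 : ℕ):ℝ) = (u:ℝ) - 1 := by
            have : 1 ≤ u := hu
            push_cast [this]
            ring
          rw [hcast, hs]
          field_simp
          ring
        rw [e1, e2]

lemma real_geom_le (u : ℕ) (hu : 0 < u) {h : ℝ} (hh : 0 < h) {N : ℕ}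
    (hN : (Real.sqrt h)⁻¹ ≤ (2:ℝ)^N) :
    ((2:ℝ) ^ ((1:ℝ)/(2*u) - 1/2)) ^ N ≤ h ^ ((1:ℝ)/4 - 1/(2*(2*u:ℝ))) := by
  have hu0 : (u:ℝ) ≠ 0 := Nat.cast_ne_zero.2 hu.ne'
  have hu1 : (1:ℝ) ≤ u := by exact_mod_cast hu
  have hsh : 0 < Real.sqrt h := Real.sqrt_pos.2 hh
  set e : ℝ := 1/2 - 1/(2*u:ℝ) with he
  have he0 : 0 ≤ e := by
    rw [he]
    have : 1/(2*(u:ℝ)) ≤ 1/2 := by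
      apply div_le_div_of_nonneg_left (by norm_num) (by norm_num)
      linarith
    linarith
  have h1 : ((2:ℝ) ^ ((1:ℝ)/(2*u) - 1/2)) ^ N = (((2:ℝ)^N)⁻¹) ^ e := by
    have a0 : ((2:ℝ)^N)⁻¹ = (2:ℝ) ^ (-(N:ℝ)) := by
      rw [← Real.rpow_natCast (2:ℝ) N, ← Real.rpow_neg (by norm_num)]
    rw [a0, ← Real.rpow_natCast ((2:ℝ) ^ ((1:ℝ)/(2*u) - 1/2)) N,
      ← Real.rpow_mul (by norm_num : (0:ℝ) ≤ 2), ← Real.rpow_mul (by norm_num : (0:ℝ) ≤ 2)]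
    congr 1
    rw [he]
    ring
  have h2 : ((2:ℝ)^N)⁻¹ ≤ Real.sqrt h := by
    have hx := inv_anti₀ (by positivity : (0:ℝ) < (Real.sqrt h)⁻¹) hN
    simpa using hx
  calc ((2:ℝ) ^ ((1:ℝ)/(2*u) - 1/2)) ^ N = (((2:ℝ)^N)⁻¹) ^ e := h1
    _ ≤ Real.sqrt h ^ e := Real.rpow_le_rpow (by positivity) h2 he0
    _ = h ^ ((1:ℝ)/4 - 1/(2*(2*u:ℝ))) := by
        rw [Real.sqrt_eq_rpow, ← Real.rpow_mul hh.le]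
        congr 1
        rw [he]
        ring

set_option maxHeartbeats 1000000 in
/-- Temporal Hölder moment bound for a continuous centered Gaussian field on `[0,∞)×[0,1]`
with Dirichlet boundary and increment variance bound
`Var(X(t,x) − X(s,y)) ≤ L(√|t−s| + |x−y|)`: for every `p ∈ [1,∞)` and `γ ∈ (0,1/4)` there is
`C > 0` with `E[(sup_{x∈[0,1]} |X(t,x) − X(s,x)|)^p] ≤ C |t−s|^{γp}` for all `s, t ≥ 0`. -/
theorem gaussian_field_temporal_hoelder_moment_bound {Ω : Type*} [MeasurableSpace Ω]
    (P : Measure Ω) [IsProbabilityMeasure P]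
    (X : ℝ → ℝ → Ω → ℝ) (L : ℝ) (hL : 0 < L)
    (hcont : ∀ᵐ ω ∂P,
      ContinuousOn (fun q : ℝ × ℝ => X q.1 q.2 ω) (Set.Ici 0 ×ˢ Set.Icc 0 1))
    (hbdry : ∀ t : ℝ, 0 ≤ t → ∀ᵐ ω ∂P, X t 0 ω = 0 ∧ X t 1 ω = 0)
    (hgauss : ∀ s t : ℝ, 0 ≤ s → 0 ≤ t → ∀ x ∈ Set.Icc (0 : ℝ) 1, ∀ y ∈ Set.Icc (0 : ℝ) 1,
      ∃ v : NNReal, (v : ℝ) ≤ L * (Real.sqrt |t - s| + |x - y|) ∧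
        Measure.map (fun ω => X t x ω - X s y ω) P = gaussianReal 0 v)
    (p : ℝ) (hp : 1 ≤ p) (γ : ℝ) (hγ : γ ∈ Set.Ioo (0 : ℝ) (1 / 4)) :
    ∃ C > (0 : ℝ), ∀ s t : ℝ, 0 ≤ s → 0 ≤ t →
      (∫⁻ ω, (⨆ x : Set.Icc (0 : ℝ) 1, ENNReal.ofReal |X t x.1 ω - X s x.1 ω|) ^ p ∂P)
        ≤ ENNReal.ofReal (C * |t - s| ^ (γ * p)) := by
  obtain ⟨hγ0, hγ14⟩ := hγ
  have hp0 : (0:ℝ) < p := lt_of_lt_of_le one_pos hp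
  have h14 : (0:ℝ) < 1 - 4*γ := by linarith
  -- choose the even exponent q = 2*u
  set u : ℕ := ⌈p⌉₊ + ⌈2 / (1 - 4*γ)⌉₊ + 1 with hu_def
  have hu : 0 < u := by omega
  have hu2 : 2 ≤ u := by
    have h1 : 1 ≤ ⌈p⌉₊ := Nat.one_le_ceil_iff.2 hp0
    omega
  set q : ℕ := 2 * u with hq_def
  have hqpos : 0 < q := by omega
  have hq_even : Even q := even_two_mul u
  have hq_cast : (q:ℝ) = 2*(u:ℝ) := by rw [hq_def]; push_cast; ring
  have hq0 : (0:ℝ) < (q:ℝ) := by exact_mod_cast hqpos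
  have hq4 : (4:ℝ) ≤ (q:ℝ) := by
    have : 4 ≤ q := by omega
    exact_mod_cast this
  have hq1 : (1:ℝ) ≤ (q:ℝ) := by linarith
  have hqp : p < (q:ℝ) := by
    have h1 : p ≤ (⌈p⌉₊:ℝ) := Nat.le_ceil p
    have h2 : (0:ℝ) ≤ (⌈2 / (1 - 4*γ)⌉₊:ℝ) := Nat.cast_nonneg _
    rw [hq_cast, hu_def]
    push_cast
    nlinarith
  have hqgamma : 2 / (1 - 4*γ) < (q:ℝ) := by
    have h1 : 2 / (1 - 4*γ) ≤ (⌈2 / (1 - 4*γ)⌉₊:ℝ) := Nat.le_ceil _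
    have h2 : (0:ℝ) ≤ (⌈p⌉₊:ℝ) := Nat.cast_nonneg _
    have h3 : 0 < 2 / (1 - 4*γ) := by positivity
    rw [hq_cast, hu_def]
    push_cast
    nlinarith
  have hβγ : γ ≤ (1:ℝ)/4 - 1/(2*(q:ℝ)) := by
    have h1 : 1/(2*(q:ℝ)) < (1 - 4*γ)/4 := by
      rw [div_lt_div_iff₀ (by positivity) (by norm_num)]
      have : 2 / (1 - 4*γ) < (q:ℝ) := hqgamma
      rw [div_lt_iff₀ h14] at this
      nlinarith
    linarith
  -- constants
  set Kr : ℝ := (gmK q).toReal with hKr_def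
  have hKr0 : (0:ℝ) ≤ Kr := ENNReal.toReal_nonneg
  have hgmK : gmK q = ENNReal.ofReal Kr := (ENNReal.ofReal_toReal (gmK_lt_top hq_even).ne).symm
  set r : ℝ := (2:ℝ) ^ ((1:ℝ)/(q:ℝ) - 1/2) with hr_def
  have hr0 : 0 < r := Real.rpow_pos_of_pos (by norm_num) _
  have hr1 : r < 1 := by
    refine Real.rpow_lt_one_of_one_lt_of_neg one_lt_two ?_
    have : (1:ℝ)/(q:ℝ) ≤ 1/4 := by
      apply div_le_div_of_nonneg_left (by norm_num) (by norm_num) hq4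
    linarith
  set c0 : ℝ := Real.sqrt L * Kr ^ ((1:ℝ)/(q:ℝ)) with hc0_def
  have hc00 : 0 ≤ c0 := by positivity
  set ctail : ℝ := 2 * c0 / (1 - r) with hctail_def
  have hctail0 : 0 ≤ ctail := by
    apply div_nonneg (by linarith) (by linarith)
  set cM : ℝ := (4*Kr) ^ ((1:ℝ)/(q:ℝ)) * Real.sqrt L with hcM_def
  have hcM0 : 0 ≤ cM := by positivity
  set c3 : ℝ := max (cM + ctail) (max ctail 1) with hc3_def
  have hc31 : (1:ℝ) ≤ c3 := le_max_of_le_right (le_max_right _ _)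
  have hc30 : (0:ℝ) < c3 := lt_of_lt_of_le one_pos hc31
  refine ⟨c3 ^ p, Real.rpow_pos_of_pos hc30 p, ?_⟩
  intro s t hs ht
  set h : ℝ := |t - s| with hh_def
  have hh0 : 0 ≤ h := abs_nonneg _
  rcases eq_or_lt_of_le hh0 with hh | hh
  · -- t = s
    have hts : t = s := by
      have := abs_eq_zero.mp hh.symm
      linarith [sub_eq_zero.mp this]
    subst hts
    have hzero : ∀ ω, (⨆ x : Set.Icc (0:ℝ) 1, ENNReal.ofReal |X t x.1 ω - X t x.1 ω|) ^ p = 0 := by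
      intro ω
      have h1 : (⨆ x : Set.Icc (0:ℝ) 1, ENNReal.ofReal |X t x.1 ω - X t x.1 ω|) = 0 := by
        simp
      rw [h1, ENNReal.zero_rpow_of_pos hp0]
    simp only [hzero, lintegral_zero]
    exact zero_le
  -- main case 0 < h
  have hsh : 0 < Real.sqrt h := Real.sqrt_pos.2 hh
  have hgrid : ∀ (n k : ℕ), k ≤ 2^n → ((k:ℝ)/2^n) ∈ Set.Icc (0:ℝ) 1 := by
    intro n k hk
    constructor
    · positivity
    · rw [div_le_one (by positivity)]
      have hx : (k:ℝ) ≤ ((2^n : ℕ) : ℝ) := Nat.cast_le.2 hk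
      push_cast at hx
      exact hx
  have hgrid1 : ∀ (n k : ℕ), k < 2^n → (((k:ℝ)+1)/2^n) ∈ Set.Icc (0:ℝ) 1 := by
    intro n k hk
    have hx : ((k+1:ℕ):ℝ)/2^n ∈ Set.Icc (0:ℝ) 1 := hgrid n (k+1) hk
    push_cast at hx
    exact hx
  have hae : ∀ (u₁ u₂ a b : ℝ), 0 ≤ u₁ → 0 ≤ u₂ → a ∈ Set.Icc (0:ℝ) 1 → b ∈ Set.Icc (0:ℝ) 1 →
      AEMeasurable (fun ω => X u₁ a ω - X u₂ b ω) P := by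
    intro u₁ u₂ a b hu₁ hu₂ ha hb
    obtain ⟨v, _, hmap⟩ := hgauss u₂ u₁ hu₂ hu₁ a ha b hb
    exact aemeasurable_of_map_gaussian hmap
  have habs_ae : ∀ {f : Ω → ℝ}, AEMeasurable f P →
      AEMeasurable (fun ω => ENNReal.ofReal |f ω|) P := fun hf =>
    (measurable_abs.comp_aemeasurable hf).ennreal_ofReal
  set A : ℝ → ℕ → Ω → ℝ≥0∞ := fun w n ω => (Finset.range (2^n)).sup
      (fun k => ENNReal.ofReal |X w (((k:ℝ)+1)/2^n) ω - X w ((k:ℝ)/2^n) ω|) with hA_def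
  set MN : ℕ → Ω → ℝ≥0∞ := fun N ω => (Finset.range (2^N + 1)).sup
      (fun k => ENNReal.ofReal |X t ((k:ℝ)/2^N) ω - X s ((k:ℝ)/2^N) ω|) with hMN_def
  set TT : ℕ → Ω → ℝ≥0∞ := fun N ω =>
      MN N ω + ∑' j : ℕ, (A t (N+1+j) ω + A s (N+1+j) ω) with hTT_def
  have hAae : ∀ (w : ℝ), 0 ≤ w → ∀ n, AEMeasurable (A w n) P := by
    intro w hw n
    refine aemeasurable_finset_sup _ fun k hk => ?_
    rw [Finset.mem_range] at hk
    exact habs_ae (hae w w _ _ hw hw (hgrid1 n k hk) (hgrid n k hk.le))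
  have hMNae : ∀ N, AEMeasurable (MN N) P := by
    intro N
    refine aemeasurable_finset_sup _ fun k hk => ?_
    rw [Finset.mem_range] at hk
    exact habs_ae (hae t s _ _ ht hs (hgrid N k (by omega)) (hgrid N k (by omega)))
  have hTae : ∀ N, AEMeasurable (TT N) P := fun N =>
    (hMNae N).add (AEMeasurable.ennreal_tsum fun j => ((hAae t ht _).add (hAae s hs _)))
  -- pathwise chaining bound
  have hpath : ∀ N : ℕ, ∀ᵐ ω ∂P,
      (⨆ x : Set.Icc (0:ℝ) 1, ENNReal.ofReal |X t x.1 ω - X s x.1 ω|) ≤ TT N ω := by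
    intro N
    filter_upwards [hcont] with ω hω
    refine iSup_le fun x => ?_
    have hFt : ContinuousOn (fun y => X t y ω) (Set.Icc 0 1) :=
      hω.comp ((continuous_const.prodMk continuous_id).continuousOn)
        (fun y hy => Set.mk_mem_prod ht hy)
    have hFs : ContinuousOn (fun y => X s y ω) (Set.Icc 0 1) :=
      hω.comp ((continuous_const.prodMk continuous_id).continuousOn)
        (fun y hy => Set.mk_mem_prod hs hy)
    have hMle : ∀ k ∈ Finset.range (2^N + 1),
        ENNReal.ofReal |X t ((k:ℝ)/2^N) ω - X s ((k:ℝ)/2^N) ω| ≤ MN N ω := by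
      intro k hk
      simp only [hMN_def]
      exact Finset.le_sup (f := fun k : ℕ =>
        ENNReal.ofReal |X t ((k:ℝ)/2^N) ω - X s ((k:ℝ)/2^N) ω|) hk
    refine chaining_bound (F := fun y => X t y ω - X s y ω) (hFt.sub hFs) x.2 N (MN N ω)
      (fun n => A t n ω + A s n ω) hMle ?_
    intro n hn k hk
    have habs : |(X t (((k:ℝ)+1)/2^n) ω - X s (((k:ℝ)+1)/2^n) ω)
          - (X t ((k:ℝ)/2^n) ω - X s ((k:ℝ)/2^n) ω)|
        ≤ |X t (((k:ℝ)+1)/2^n) ω - X t ((k:ℝ)/2^n) ω|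
          + |X s (((k:ℝ)+1)/2^n) ω - X s ((k:ℝ)/2^n) ω| := by
      have he : (X t (((k:ℝ)+1)/2^n) ω - X s (((k:ℝ)+1)/2^n) ω)
            - (X t ((k:ℝ)/2^n) ω - X s ((k:ℝ)/2^n) ω)
          = (X t (((k:ℝ)+1)/2^n) ω - X t ((k:ℝ)/2^n) ω)
            + (-(X s (((k:ℝ)+1)/2^n) ω - X s ((k:ℝ)/2^n) ω)) := by ring
      rw [he]
      exact (abs_add_le _ _).trans (by rw [abs_neg])
    calc ENNReal.ofReal |(fun y => X t y ω - X s y ω) (((k:ℝ)+1)/2^n)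
          - (fun y => X t y ω - X s y ω) ((k:ℝ)/2^n)|
        ≤ ENNReal.ofReal (|X t (((k:ℝ)+1)/2^n) ω - X t ((k:ℝ)/2^n) ω|
            + |X s (((k:ℝ)+1)/2^n) ω - X s ((k:ℝ)/2^n) ω|) := ENNReal.ofReal_le_ofReal habs
      _ ≤ ENNReal.ofReal |X t (((k:ℝ)+1)/2^n) ω - X t ((k:ℝ)/2^n) ω|
            + ENNReal.ofReal |X s (((k:ℝ)+1)/2^n) ω - X s ((k:ℝ)/2^n) ω| := ENNReal.ofReal_add_le
      _ ≤ A t n ω + A s n ω := by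
          simp only [hA_def]
          exact add_le_add
            (Finset.le_sup (f := fun k : ℕ =>
              ENNReal.ofReal |X t (((k:ℝ)+1)/2^n) ω - X t ((k:ℝ)/2^n) ω|) hk)
            (Finset.le_sup (f := fun k : ℕ =>
              ENNReal.ofReal |X s (((k:ℝ)+1)/2^n) ω - X s ((k:ℝ)/2^n) ω|) hk)
  -- moment bound for spatial increments
  have hA_norm : ∀ (w : ℝ), 0 ≤ w → ∀ n : ℕ,
      (∫⁻ ω, (A w n ω) ^ (q:ℝ) ∂P) ^ (1/(q:ℝ)) ≤ ENNReal.ofReal (c0 * r^n) := by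
    intro w hw n
    have hbound : ∀ k ∈ Finset.range (2^n),
        ∫⁻ ω, (ENNReal.ofReal |X w (((k:ℝ)+1)/2^n) ω - X w ((k:ℝ)/2^n) ω|) ^ (q:ℝ) ∂P
          ≤ ENNReal.ofReal ((Real.sqrt (L * (1/2)^n))^q * Kr) := by
      intro k hk
      rw [Finset.mem_range] at hk
      obtain ⟨v, hvle, hmap⟩ := hgauss w w hw hw _ (hgrid1 n k hk) _ (hgrid n k hk.le)
      rw [lintegral_abs_rpow_of_map_gaussian hmap q hqpos]
      have hv : (v:ℝ) ≤ L * (1/2)^n := by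
        have he : |(((k:ℝ)+1)/2^n) - ((k:ℝ)/2^n)| = (1/2)^n := by
          rw [div_sub_div_same, show ((k:ℝ)+1) - k = 1 by ring,
            abs_of_nonneg (by positivity : (0:ℝ) ≤ 1/2^n), one_div, ← inv_pow, one_div]
        rw [he, sub_self, abs_zero, Real.sqrt_zero, zero_add] at hvle
        exact hvle
      calc (ENNReal.ofReal (Real.sqrt v))^(q:ℝ) * gmK q
          ≤ (ENNReal.ofReal (Real.sqrt (L * (1/2)^n)))^(q:ℝ) * gmK q :=
            mul_le_mul_left
              (ENNReal.rpow_le_rpow (ENNReal.ofReal_le_ofReal (Real.sqrt_le_sqrt hv))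
                (by positivity)) _
        _ = ENNReal.ofReal ((Real.sqrt (L * (1/2)^n))^q * Kr) := by
            rw [hgmK, ENNReal.rpow_natCast, ← ENNReal.ofReal_pow (Real.sqrt_nonneg _),
              ← ENNReal.ofReal_mul (by positivity)]
    have h1 := lintegral_finset_sup_rpow_le (P := P) (q := (q:ℝ)) (by positivity)
      (fun k hk => by
        rw [Finset.mem_range] at hk
        exact habs_ae (hae w w _ _ hw hw (hgrid1 n k hk) (hgrid n k hk.le))) hbound
    calc (∫⁻ ω, (A w n ω) ^ (q:ℝ) ∂P) ^ (1/(q:ℝ))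
        ≤ (((2^n : ℕ) : ℝ≥0∞) * ENNReal.ofReal ((Real.sqrt (L * (1/2)^n))^q * Kr)) ^ (1/(q:ℝ)) :=
          ENNReal.rpow_le_rpow h1 (by positivity)
      _ = ENNReal.ofReal (((2:ℝ)^n * ((Real.sqrt (L * (1/2)^n))^q * Kr)) ^ (1/(q:ℝ))) := by
          rw [show (((2^n:ℕ)):ℝ≥0∞) = ENNReal.ofReal ((2:ℝ)^n) by
              rw [← ENNReal.ofReal_natCast]; congr 1; push_cast; ring,
            ← ENNReal.ofReal_mul (by positivity),
            ENNReal.ofReal_rpow_of_nonneg (by positivity) (by positivity)]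
      _ = ENNReal.ofReal (c0 * r^n) := by
          congr 1
          rw [hc0_def, hr_def, hq_cast, hq_def, ← mul_assoc]
          exact real_tail_eq u hu hL.le hKr0 n
  -- moment bound for grid values
  have hMN_norm : ∀ N : ℕ,
      (∫⁻ ω, (MN N ω) ^ (q:ℝ) ∂P) ^ (1/(q:ℝ))
        ≤ ENNReal.ofReal ((((2:ℝ)^N + 1) * ((Real.sqrt (L * Real.sqrt h))^q * Kr)) ^ (1/(q:ℝ))) := by
    intro N
    have hbound : ∀ k ∈ Finset.range (2^N + 1),
        ∫⁻ ω, (ENNReal.ofReal |X t ((k:ℝ)/2^N) ω - X s ((k:ℝ)/2^N) ω|) ^ (q:ℝ) ∂P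
          ≤ ENNReal.ofReal ((Real.sqrt (L * Real.sqrt h))^q * Kr) := by
      intro k hk
      rw [Finset.mem_range] at hk
      obtain ⟨v, hvle, hmap⟩ := hgauss s t hs ht _ (hgrid N k (by omega)) _ (hgrid N k (by omega))
      rw [lintegral_abs_rpow_of_map_gaussian hmap q hqpos]
      have hv : (v:ℝ) ≤ L * Real.sqrt h := by
        rw [sub_self, abs_zero, add_zero, ← hh_def] at hvle
        exact hvle
      calc (ENNReal.ofReal (Real.sqrt v))^(q:ℝ) * gmK q
          ≤ (ENNReal.ofReal (Real.sqrt (L * Real.sqrt h)))^(q:ℝ) * gmK q :=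
            mul_le_mul_left
              (ENNReal.rpow_le_rpow (ENNReal.ofReal_le_ofReal (Real.sqrt_le_sqrt hv))
                (by positivity)) _
        _ = ENNReal.ofReal ((Real.sqrt (L * Real.sqrt h))^q * Kr) := by
            rw [hgmK, ENNReal.rpow_natCast, ← ENNReal.ofReal_pow (Real.sqrt_nonneg _),
              ← ENNReal.ofReal_mul (by positivity)]
    have h1 := lintegral_finset_sup_rpow_le (P := P) (q := (q:ℝ)) (by positivity)
      (fun k hk => by
        rw [Finset.mem_range] at hk
        exact habs_ae (hae t s _ _ ht hs (hgrid N k (by omega)) (hgrid N k (by omega))))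
      hbound
    calc (∫⁻ ω, (MN N ω) ^ (q:ℝ) ∂P) ^ (1/(q:ℝ))
        ≤ (((2^N + 1 : ℕ) : ℝ≥0∞) * ENNReal.ofReal ((Real.sqrt (L * Real.sqrt h))^q * Kr)) ^ (1/(q:ℝ)) :=
          ENNReal.rpow_le_rpow h1 (by positivity)
      _ = ENNReal.ofReal ((((2:ℝ)^N + 1) * ((Real.sqrt (L * Real.sqrt h))^q * Kr)) ^ (1/(q:ℝ))) := by
          rw [show (((2^N + 1 :ℕ)):ℝ≥0∞) = ENNReal.ofReal ((2:ℝ)^N + 1) by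
              rw [← ENNReal.ofReal_natCast]; congr 1; push_cast; ring,
            ← ENNReal.ofReal_mul (by positivity),
            ENNReal.ofReal_rpow_of_nonneg (by positivity) (by positivity)]
  -- tail estimate
  have h1r : (0:ℝ) < 1 - r := by linarith
  have htail : ∀ N : ℕ,
      (∫⁻ ω, (∑' j : ℕ, (A t (N+1+j) ω + A s (N+1+j) ω)) ^ (q:ℝ) ∂P) ^ (1/(q:ℝ))
        ≤ ENNReal.ofReal (ctail * r^N) := by
    intro N
    have hsummable : Summable (fun j : ℕ => 2 * c0 * r^(N+1+j)) := by
      simp_rw [pow_add, ← mul_assoc]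
      exact (summable_geometric_of_lt_one hr0.le hr1).mul_left _
    calc (∫⁻ ω, (∑' j : ℕ, (A t (N+1+j) ω + A s (N+1+j) ω)) ^ (q:ℝ) ∂P) ^ (1/(q:ℝ))
        ≤ ∑' j : ℕ, (∫⁻ ω, (A t (N+1+j) ω + A s (N+1+j) ω) ^ (q:ℝ) ∂P) ^ (1/(q:ℝ)) :=
          lp_tsum_le hq1 (fun j => (hAae t ht _).add (hAae s hs _))
      _ ≤ ∑' j : ℕ, ENNReal.ofReal (2 * c0 * r^(N+1+j)) := by
          refine ENNReal.tsum_le_tsum fun j => ?_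
          calc (∫⁻ ω, (A t (N+1+j) ω + A s (N+1+j) ω) ^ (q:ℝ) ∂P) ^ (1/(q:ℝ))
              ≤ (∫⁻ ω, (A t (N+1+j) ω) ^ (q:ℝ) ∂P) ^ (1/(q:ℝ))
                + (∫⁻ ω, (A s (N+1+j) ω) ^ (q:ℝ) ∂P) ^ (1/(q:ℝ)) :=
                ENNReal.lintegral_Lp_add_le (hAae t ht _) (hAae s hs _) hq1
            _ ≤ ENNReal.ofReal (c0 * r^(N+1+j)) + ENNReal.ofReal (c0 * r^(N+1+j)) :=
                add_le_add (hA_norm t ht _) (hA_norm s hs _)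
            _ = ENNReal.ofReal (2 * c0 * r^(N+1+j)) := by
                rw [← ENNReal.ofReal_add (by positivity) (by positivity)]
                congr 1
                ring
      _ = ENNReal.ofReal (∑' j : ℕ, 2 * c0 * r^(N+1+j)) :=
          (ENNReal.ofReal_tsum_of_nonneg (fun j => by positivity) hsummable).symm
      _ ≤ ENNReal.ofReal (ctail * r^N) := by
          refine ENNReal.ofReal_le_ofReal ?_
          have hsum : ∑' j : ℕ, 2 * c0 * r^(N+1+j) = 2 * c0 * r^(N+1) * (1-r)⁻¹ := by
            have : ∀ j : ℕ, 2 * c0 * r^(N+1+j) = (2 * c0 * r^(N+1)) * r^j := by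
              intro j; rw [pow_add]; ring
            simp_rw [this]
            rw [tsum_mul_left, tsum_geometric_of_lt_one hr0.le hr1]
          rw [hsum, hctail_def]
          have hrN : r^(N+1) ≤ r^N := pow_le_pow_of_le_one hr0.le hr1.le (by omega)
          calc 2*c0*r^(N+1)*(1-r)⁻¹ = (2*c0*(1-r)⁻¹) * r^(N+1) := by ring
            _ ≤ (2*c0*(1-r)⁻¹) * r^N := by
                refine mul_le_mul_of_nonneg_left hrN ?_
                have : (0:ℝ) ≤ (1-r)⁻¹ := by positivity
                positivity
            _ = 2*c0/(1-r) * r^N := by rw [div_eq_mul_inv]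
  -- master estimate
  have hmain : ∀ N : ℕ,
      (∫⁻ ω, (MN N ω) ^ (q:ℝ) ∂P) ^ (1/(q:ℝ)) + ENNReal.ofReal (ctail * r^N)
        ≤ ENNReal.ofReal (c3 * h^γ) →
      (∫⁻ ω, (⨆ x : Set.Icc (0:ℝ) 1, ENNReal.ofReal |X t x.1 ω - X s x.1 ω|) ^ p ∂P)
        ≤ ENNReal.ofReal (c3^p * h^(γ*p)) := by
    intro N hbound
    have hTnorm : (∫⁻ ω, (TT N ω) ^ (q:ℝ) ∂P) ^ (1/(q:ℝ)) ≤ ENNReal.ofReal (c3 * h^γ) := by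
      calc (∫⁻ ω, (TT N ω) ^ (q:ℝ) ∂P) ^ (1/(q:ℝ))
          ≤ (∫⁻ ω, (MN N ω) ^ (q:ℝ) ∂P) ^ (1/(q:ℝ))
            + (∫⁻ ω, (∑' j : ℕ, (A t (N+1+j) ω + A s (N+1+j) ω)) ^ (q:ℝ) ∂P) ^ (1/(q:ℝ)) := by
            exact ENNReal.lintegral_Lp_add_le (hMNae N)
              (AEMeasurable.ennreal_tsum fun j => ((hAae t ht _).add (hAae s hs _))) hq1
        _ ≤ (∫⁻ ω, (MN N ω) ^ (q:ℝ) ∂P) ^ (1/(q:ℝ)) + ENNReal.ofReal (ctail * r^N) :=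
            add_le_add_right (htail N) _
        _ ≤ ENNReal.ofReal (c3 * h^γ) := hbound
    calc ∫⁻ ω, (⨆ x : Set.Icc (0:ℝ) 1, ENNReal.ofReal |X t x.1 ω - X s x.1 ω|) ^ p ∂P
        ≤ ∫⁻ ω, (TT N ω)^p ∂P :=
          lintegral_mono_ae ((hpath N).mono fun ω hω => ENNReal.rpow_le_rpow hω hp0.le)
      _ ≤ (∫⁻ ω, (TT N ω)^(q:ℝ) ∂P)^(p/(q:ℝ)) :=
          lintegral_rpow_le_rpow_of_exponent_le (hTae N) hp0 hqp
      _ = ((∫⁻ ω, (TT N ω)^(q:ℝ) ∂P)^(1/(q:ℝ)))^p := by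
          rw [← ENNReal.rpow_mul]
          congr 1
          rw [one_div]
          field_simp
      _ ≤ (ENNReal.ofReal (c3 * h^γ))^p := ENNReal.rpow_le_rpow hTnorm hp0.le
      _ = ENNReal.ofReal ((c3 * h^γ)^p) := ENNReal.ofReal_rpow_of_nonneg (by positivity) hp0.le
      _ = ENNReal.ofReal (c3^p * h^(γ*p)) := by
          congr 1
          rw [Real.mul_rpow hc30.le (Real.rpow_nonneg hh0 _), ← Real.rpow_mul hh0]
  rcases le_or_gt 1 h with hh1 | hh1
  · -- h ≥ 1 : take N = 0, boundary values vanish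
    refine hmain 0 ?_
    have hM0 : (∫⁻ ω, (MN 0 ω) ^ (q:ℝ) ∂P) = 0 := by
      have hzero : ∀ᵐ ω ∂P, (MN 0 ω) ^ (q:ℝ) = 0 := by
        filter_upwards [hbdry t ht, hbdry s hs] with ω hωt hωs
        have hMz : MN 0 ω = 0 := by
          rw [hMN_def]
          apply le_antisymm _ zero_le
          refine Finset.sup_le fun k hk => ?_
          rw [Finset.mem_range] at hk
          interval_cases k
          · simp only [Nat.cast_zero, pow_zero, zero_div]
            rw [hωt.1, hωs.1]
            simp
          · simp only [Nat.cast_one, pow_zero, div_one]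
            rw [hωt.2, hωs.2]
            simp
        rw [hMz, ENNReal.zero_rpow_of_pos (by positivity)]
      calc ∫⁻ ω, (MN 0 ω)^(q:ℝ) ∂P
          = ∫⁻ _, (0:ℝ≥0∞) ∂P := lintegral_congr_ae (g := fun _ => (0:ℝ≥0∞)) hzero
        _ = 0 := lintegral_zero
    rw [hM0, ENNReal.zero_rpow_of_pos (by positivity), zero_add, pow_zero, mul_one]
    refine ENNReal.ofReal_le_ofReal ?_
    have h2 : (1:ℝ) ≤ h^γ := by
      calc (1:ℝ) = h^(0:ℝ) := (Real.rpow_zero h).symm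
        _ ≤ h^γ := Real.rpow_le_rpow_of_exponent_le hh1 hγ0.le
    have h3 : ctail ≤ c3 := le_max_of_le_right (le_max_left _ _)
    nlinarith
  · -- h < 1 : dyadic level matched to h
    have hsh1 : Real.sqrt h ≤ 1 := by
      rw [show (1:ℝ) = Real.sqrt 1 by simp]
      exact Real.sqrt_le_sqrt hh1.le
    have hinv1 : 1 ≤ (Real.sqrt h)⁻¹ := by
      have hx : Real.sqrt h * (Real.sqrt h)⁻¹ ≤ 1 * (Real.sqrt h)⁻¹ :=
        mul_le_mul_of_nonneg_right hsh1 (by positivity)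
      rwa [mul_inv_cancel₀ hsh.ne', one_mul] at hx
    set a : ℝ := Real.logb 2 (Real.sqrt h)⁻¹ with ha_def
    have ha0 : 0 ≤ a := Real.logb_nonneg one_lt_two hinv1
    set N : ℕ := ⌈a⌉₊ with hN_def
    have hrpow_a : (2:ℝ) ^ a = (Real.sqrt h)⁻¹ :=
      Real.rpow_logb (by norm_num) (by norm_num) (by positivity)
    have hN1 : (Real.sqrt h)⁻¹ ≤ (2:ℝ)^N := by
      rw [← hrpow_a, ← Real.rpow_natCast (2:ℝ) N]
      exact Real.rpow_le_rpow_of_exponent_le one_le_two (Nat.le_ceil a)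
    have hN2 : (2:ℝ)^N ≤ 2 / Real.sqrt h := by
      have h1 : (N:ℝ) ≤ a + 1 := (Nat.ceil_lt_add_one ha0).le
      calc (2:ℝ)^N = (2:ℝ)^(N:ℝ) := (Real.rpow_natCast 2 N).symm
        _ ≤ (2:ℝ)^(a+1) := Real.rpow_le_rpow_of_exponent_le one_le_two h1
        _ = 2 / Real.sqrt h := by
            rw [Real.rpow_add (by norm_num), hrpow_a, Real.rpow_one, div_eq_mul_inv]
            ring
    refine hmain N ?_
    have hhead : (∫⁻ ω, (MN N ω) ^ (q:ℝ) ∂P) ^ (1/(q:ℝ))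
        ≤ ENNReal.ofReal (cM * h ^ ((1:ℝ)/4 - 1/(2*(q:ℝ)))) := by
      refine (hMN_norm N).trans (ENNReal.ofReal_le_ofReal ?_)
      have hhb := real_head_bound u hu hL.le hKr0 hh hN2
      rw [← hq_def, ← hq_cast] at hhb
      rw [hcM_def]
      exact hhb
    have hgeo : ctail * r^N ≤ ctail * h ^ ((1:ℝ)/4 - 1/(2*(q:ℝ))) := by
      refine mul_le_mul_of_nonneg_left ?_ hctail0
      have hgl := real_geom_le u hu hh hN1
      rw [← hq_cast] at hgl
      rw [hr_def]
      exact hgl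
    have hβγ2 : h ^ ((1:ℝ)/4 - 1/(2*(q:ℝ))) ≤ h^γ :=
      Real.rpow_le_rpow_of_exponent_ge hh hh1.le hβγ
    calc (∫⁻ ω, (MN N ω) ^ (q:ℝ) ∂P) ^ (1/(q:ℝ)) + ENNReal.ofReal (ctail * r^N)
        ≤ ENNReal.ofReal (cM * h ^ ((1:ℝ)/4 - 1/(2*(q:ℝ))))
          + ENNReal.ofReal (ctail * h ^ ((1:ℝ)/4 - 1/(2*(q:ℝ)))) :=
          add_le_add hhead (ENNReal.ofReal_le_ofReal hgeo)
      _ = ENNReal.ofReal ((cM + ctail) * h ^ ((1:ℝ)/4 - 1/(2*(q:ℝ)))) := by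
          rw [← ENNReal.ofReal_add (by positivity) (by positivity)]
          congr 1
          ring
      _ ≤ ENNReal.ofReal (c3 * h^γ) := by
          refine ENNReal.ofReal_le_ofReal ?_
          have h4 : cM + ctail ≤ c3 := le_max_left _ _
          calc (cM + ctail) * h ^ ((1:ℝ)/4 - 1/(2*(q:ℝ)))
              ≤ c3 * h ^ ((1:ℝ)/4 - 1/(2*(q:ℝ))) := by
                refine mul_le_mul_of_nonneg_right h4 (Real.rpow_nonneg hh0 _)
            _ ≤ c3 * h^γ := mul_le_mul_of_nonneg_left hβγ2 hc30.le
end
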